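/- arXiv:2211.11473 — 4 statements merged into one kernel-verified Lean document; each statement's English description precedes it below -/
import Mathlib

section
/- Let (E, F) be a resistance form on a set X whose resistance metric R is complete and such that (X,R) is doubling and uniformly perfect. Then there exists α > 1 such that for every nonempty finite subset V ⊆ X and all x, y ∈ V with x ≠ y, R_{V,B}(x,y) ≤ 2R(x,y), where B = B_R(x, αR(x,y)), (μ_{p,q}) are the resistance weights associated with the trace (E|_V, ℓ(V)), and R_{V,B}(x,y)^{-1} := min{(1/2)∑_{p,q ∈ B∩V}(f(p)−f(q))² μ_{p,q} : f ∈ ℓ(V), f(x)=1, f(y)=0}. -/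
open Filter Set Metric
open scoped ENNReal Topology

/-- A resistance form `(E, F)` on a set `X` (Kigami):
`F` is a linear subspace of the real-valued functions on `X`, `E` is a nonnegative
symmetric bilinear form on `F` such that (RF1) constants belong to `F` and
`E(u,u) = 0` iff `u` is constant, (RF2) the quotient of `F` by the constants is a
Hilbert space under `E` (stated as completeness of the `E`-seminorm on `F`),
(RF3) points of `X` are separated by `F`, (RF4) for `x ≠ y` the quantity
`R(x,y) = (inf {E(u,u) : u ∈ F, u x = 1, u y = 0})⁻¹` is finite (i.e. the infimum
is positive; an admissible `u` always exists), and (RF5) the Markov property holds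
for the unit truncation. -/
structure ResistanceForm (X : Type*) where
  F : Set (X → ℝ)
  E : (X → ℝ) → (X → ℝ) → ℝ
  zero_mem : (0 : X → ℝ) ∈ F
  add_mem : ∀ {u v : X → ℝ}, u ∈ F → v ∈ F → u + v ∈ F
  smul_mem : ∀ (c : ℝ) {u : X → ℝ}, u ∈ F → c • u ∈ F
  const_mem : ∀ c : ℝ, (fun _ => c) ∈ F
  symm : ∀ u ∈ F, ∀ v ∈ F, E u v = E v u
  add_left : ∀ u ∈ F, ∀ v ∈ F, ∀ w ∈ F, E (u + v) w = E u w + E v w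
  smul_left : ∀ (c : ℝ), ∀ u ∈ F, ∀ v ∈ F, E (c • u) v = c * E u v
  nonneg : ∀ u ∈ F, 0 ≤ E u u
  null_iff_const : ∀ u ∈ F, (E u u = 0 ↔ ∃ c : ℝ, ∀ x, u x = c)
  complete : ∀ u : ℕ → (X → ℝ), (∀ n, u n ∈ F) →
    (∀ ε : ℝ, 0 < ε → ∃ N : ℕ, ∀ m ≥ N, ∀ n ≥ N, E (u m - u n) (u m - u n) < ε) →
    ∃ v ∈ F, ∀ ε : ℝ, 0 < ε → ∃ N : ℕ, ∀ n ≥ N, E (v - u n) (v - u n) < ε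
  sep : ∀ x y : X, x ≠ y → ∃ u ∈ F, u x ≠ u y
  exists_unit : ∀ x y : X, x ≠ y → ∃ u ∈ F, u x = 1 ∧ u y = 0
  inf_pos : ∀ x y : X, x ≠ y →
    0 < sInf {e : ℝ | ∃ u ∈ F, u x = 1 ∧ u y = 0 ∧ E u u = e}
  markov : ∀ u ∈ F, (fun x => max 0 (min 1 (u x))) ∈ F ∧
    E (fun x => max 0 (min 1 (u x))) (fun x => max 0 (min 1 (u x))) ≤ E u u

namespace ResistanceForm

variable {X : Type*}

open Classical in
/-- The resistance metric `R` associated with a resistance form: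
`R(x,x) = 0` and `R(x,y) = (inf {E(u,u) : u ∈ F, u x = 1, u y = 0})⁻¹` for `x ≠ y`. -/
noncomputable def rmetric (rf : ResistanceForm X) (x y : X) : ℝ :=
  if x = y then 0
  else (sInf {e : ℝ | ∃ u ∈ rf.F, u x = 1 ∧ u y = 0 ∧ rf.E u u = e})⁻¹

open Classical in
/-- The resistance `𝓡(A,B)` between two sets: the reciprocal of the minimal energy of
functions that are `≡ 1` on `A` and `≡ 0` on `B` if such functions exist, `0` if no
such function exists, and `∞` if `A` or `B` is empty. -/
noncomputable def setRes (rf : ResistanceForm X) (A B : Set X) : ℝ≥0∞ :=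
  if A.Nonempty ∧ B.Nonempty then
    (if ∃ u ∈ rf.F, (∀ x ∈ A, u x = 1) ∧ (∀ x ∈ B, u x = 0) then
      (ENNReal.ofReal
        (sInf {e : ℝ | ∃ u ∈ rf.F, (∀ x ∈ A, u x = 1) ∧ (∀ x ∈ B, u x = 0) ∧ rf.E u u = e}))⁻¹
    else 0)
  else ⊤

end ResistanceForm

/-- A distance function `ρ` on `X` is doubling: there is `N ∈ ℕ` such that every ball of
radius `2r` is covered by `N` balls of radius `r`. -/
def DoublingOf {X : Type*} (ρ : X → X → ℝ) : Prop :=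
  ∃ N : ℕ, ∀ (x : X) (r : ℝ), ∃ s : Finset X, s.card ≤ N ∧
    {y : X | ρ x y < 2 * r} ⊆ ⋃ z ∈ s, {y : X | ρ z y < r}

/-- A distance function `ρ` on `X` is uniformly perfect: there is `γ > 1` such that
`B(x, γ r) \ B(x, r) ≠ ∅` whenever `B(x,r)` is not the whole space. -/
def UniformlyPerfectOf {X : Type*} (ρ : X → X → ℝ) : Prop :=
  ∃ γ : ℝ, 1 < γ ∧ ∀ (x : X) (r : ℝ), 0 < r → {y : X | ρ x y < r} ≠ Set.univ →
    ({y : X | ρ x y < γ * r} \ {y : X | ρ x y < r}).Nonempty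

namespace ResistanceForm

/-- The quadratic form of the trace of the resistance form on a subset `Y ⊆ X`:
`E|_Y(f) = inf {E(u,u) : u ∈ F, u|_Y = f|_Y}` (for finite `Y` the trace domain is all of
`ℓ(Y)` and this infimum is attained). -/
noncomputable def traceQ {X : Type*} (rf : ResistanceForm X) (Y : Set X) (f : X → ℝ) : ℝ :=
  sInf {e : ℝ | ∃ u ∈ rf.F, (∀ x ∈ Y, u x = f x) ∧ rf.E u u = e}

open Classical in
/-- `μ` is the family of resistance weights associated with the trace `(E|_V, ℓ(V))` of
the resistance form on a finite set `V ⊆ X`: it is symmetric, the diagonal entries are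
the negated row sums, and the trace energy is reproduced as
`E|_V(f,f) = (1/2) ∑_{x,y ∈ V} (f x - f y)² μ_{x,y}`. -/
def IsResistanceWeights {X : Type*} (rf : ResistanceForm X) (V : Finset X)
    (μ : X → X → ℝ) : Prop :=
  (∀ x y : X, μ x y = μ y x) ∧
  (∀ x ∈ V, μ x x = - ∑ y ∈ V.erase x, μ x y) ∧
  (∀ f : X → ℝ, rf.traceQ (V : Set X) f =
    (1 / 2) * ∑ x ∈ V, ∑ y ∈ V, (f x - f y) * (f x - f y) * μ x y)

/-- A resistance form is local if `E(u,v) = 0` whenever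
`inf {R(x,y) : u x ≠ 0, v y ≠ 0} > 0`. -/
def IsLocal {X : Type*} (rf : ResistanceForm X) : Prop :=
  ∀ u ∈ rf.F, ∀ v ∈ rf.F,
    (∃ δ : ℝ, 0 < δ ∧ ∀ x y : X, u x ≠ 0 → v y ≠ 0 → δ ≤ rf.rmetric x y) →
    rf.E u v = 0

end ResistanceForm

namespace RFAux

variable {X : Type*}

/-- energy of scalar multiple -/
lemma E_smul (rf : ResistanceForm X) {u : X → ℝ} (hu : u ∈ rf.F) (c : ℝ) :
    rf.E (c • u) (c • u) = c ^ 2 * rf.E u u := by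
  have h1 := rf.smul_left c u hu (c • u) (rf.smul_mem c hu)
  have h2 := rf.smul_left c u hu u hu
  have h3 := rf.symm u hu (c • u) (rf.smul_mem c hu)
  rw [h1, h3, h2]; ring

lemma E_add_split (rf : ResistanceForm X) {u v : X → ℝ} (hu : u ∈ rf.F) (hv : v ∈ rf.F) :
    rf.E (u + v) (u + v) = rf.E u u + 2 * rf.E u v + rf.E v v := by
  have huv := rf.add_mem hu hv
  have h1 := rf.add_left u hu v hv (u + v) huv
  have h2 := rf.symm u hu (u + v) huv
  have h3 := rf.symm v hv (u + v) huv
  have h4 := rf.add_left u hu v hv u hu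
  have h5 := rf.add_left u hu v hv v hv
  have h6 := rf.symm u hu v hv
  rw [h1, h2, h3, h4, h5, h6]; ring

/-- Cauchy–Schwarz for the form. -/
lemma E_cs (rf : ResistanceForm X) {u v : X → ℝ} (hu : u ∈ rf.F) (hv : v ∈ rf.F) :
    (rf.E u v) ^ 2 ≤ rf.E u u * rf.E v v := by
  set a := rf.E u u with ha
  set b := rf.E u v with hb
  set c := rf.E v v with hc
  have key : ∀ t : ℝ, 0 ≤ a + 2 * t * b + t ^ 2 * c := by
    intro t
    have htv : t • v ∈ rf.F := rf.smul_mem t hv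
    have h0 := rf.nonneg _ (rf.add_mem hu htv)
    have hsplit := E_add_split rf hu htv
    have h1 : rf.E u (t • v) = t * b := by
      rw [rf.symm u hu (t • v) htv, rf.smul_left t v hv u hu, rf.symm v hv u hu]
    have h2 := E_smul rf hv t
    rw [hsplit, h1, h2] at h0
    nlinarith [h0]
  have hcn : 0 ≤ c := rf.nonneg v hv
  have han : 0 ≤ a := rf.nonneg u hu
  rcases eq_or_lt_of_le hcn with hc0 | hc0
  · have hb0 : b = 0 := by
      by_contra hb0
      have h2b : (2 : ℝ) * b ≠ 0 := by simpa using hb0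
      have ht : (-(a + 1) / (2 * b)) * (2 * b) = -(a + 1) := div_mul_cancel₀ _ h2b
      have h1 := key (-(a + 1) / (2 * b))
      rw [← hc0, mul_zero] at h1
      nlinarith [h1, ht]
    rw [hb0, ← hc0]
    nlinarith
  · have hne : c ≠ 0 := ne_of_gt hc0
    have hsc : (-b / c) * c = -b := div_mul_cancel₀ _ hne
    have h2 : 0 ≤ (a + 2 * (-b / c) * b + (-b / c) ^ 2 * c) * c :=
      mul_nonneg (key _) hcn
    nlinarith [h2, hsc]

lemma E_le_sqrt (rf : ResistanceForm X) {u v : X → ℝ} (hu : u ∈ rf.F) (hv : v ∈ rf.F) :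
    rf.E u v ≤ Real.sqrt (rf.E u u) * Real.sqrt (rf.E v v) := by
  have h := E_cs rf hu hv
  have h2 : rf.E u v ≤ |rf.E u v| := le_abs_self _
  calc rf.E u v ≤ |rf.E u v| := h2
    _ = Real.sqrt ((rf.E u v) ^ 2) := (Real.sqrt_sq_eq_abs _).symm
    _ ≤ Real.sqrt (rf.E u u * rf.E v v) := Real.sqrt_le_sqrt h
    _ = Real.sqrt (rf.E u u) * Real.sqrt (rf.E v v) := Real.sqrt_mul (rf.nonneg u hu) _

/-- seminorm triangle inequality -/
lemma sqrt_E_add (rf : ResistanceForm X) {u v : X → ℝ} (hu : u ∈ rf.F) (hv : v ∈ rf.F) :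
    Real.sqrt (rf.E (u + v) (u + v)) ≤ Real.sqrt (rf.E u u) + Real.sqrt (rf.E v v) := by
  have h1 : rf.E (u + v) (u + v) ≤ (Real.sqrt (rf.E u u) + Real.sqrt (rf.E v v)) ^ 2 := by
    rw [E_add_split rf hu hv]
    have h2 := E_le_sqrt rf hu hv
    have h3 : Real.sqrt (rf.E u u) ^ 2 = rf.E u u := Real.sq_sqrt (rf.nonneg u hu)
    have h4 : Real.sqrt (rf.E v v) ^ 2 = rf.E v v := Real.sq_sqrt (rf.nonneg v hv)
    nlinarith [h2]
  calc Real.sqrt (rf.E (u + v) (u + v)) ≤ Real.sqrt ((Real.sqrt (rf.E u u) + Real.sqrt (rf.E v v)) ^ 2) :=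
        Real.sqrt_le_sqrt h1
    _ = |Real.sqrt (rf.E u u) + Real.sqrt (rf.E v v)| := Real.sqrt_sq_eq_abs _
    _ = _ := abs_of_nonneg (by positivity)

lemma sum_mem_F (rf : ResistanceForm X) {ι : Type*} (s : Finset ι) (g : ι → X → ℝ)
    (h : ∀ i ∈ s, g i ∈ rf.F) : (∑ i ∈ s, g i) ∈ rf.F := by
  classical
  induction s using Finset.induction_on with
  | empty => simpa using rf.zero_mem
  | insert _ _ hni ih =>
      rw [Finset.sum_insert hni]
      exact rf.add_mem (h _ (Finset.mem_insert_self _ _))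
        (ih fun i hi => h i (Finset.mem_insert_of_mem hi))

lemma sqrt_E_sum (rf : ResistanceForm X) {ι : Type*} (s : Finset ι) (g : ι → X → ℝ)
    (h : ∀ i ∈ s, g i ∈ rf.F) :
    Real.sqrt (rf.E (∑ i ∈ s, g i) (∑ i ∈ s, g i)) ≤
      ∑ i ∈ s, Real.sqrt (rf.E (g i) (g i)) := by
  classical
  induction s using Finset.induction_on with
  | empty =>
      simp only [Finset.sum_empty]
      have h0 : rf.E 0 0 = 0 := by
        have := E_smul rf rf.zero_mem 0
        simpa using this
      simp [h0]
  | insert a s' hni ih =>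
      rw [Finset.sum_insert hni, Finset.sum_insert hni]
      have hga : g a ∈ rf.F := h _ (Finset.mem_insert_self _ _)
      have hs : (∑ i ∈ s', g i) ∈ rf.F := sum_mem_F rf s' g
        (fun i hi => h i (Finset.mem_insert_of_mem hi))
      calc Real.sqrt (rf.E (g a + ∑ i ∈ s', g i) (g a + ∑ i ∈ s', g i))
          ≤ Real.sqrt (rf.E (g a) (g a)) + Real.sqrt (rf.E (∑ i ∈ s', g i) (∑ i ∈ s', g i)) :=
            sqrt_E_add rf hga hs
        _ ≤ _ := by
            have := ih (fun i hi => h i (Finset.mem_insert_of_mem hi))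
            linarith

end RFAux
namespace RFAux

variable {X : Type*}

lemma E_const (rf : ResistanceForm X) (c : ℝ) :
    rf.E (fun _ => c) (fun _ => c) = 0 :=
  (rf.null_iff_const _ (rf.const_mem c)).mpr ⟨c, fun _ => rfl⟩

lemma E_add_const (rf : ResistanceForm X) {u : X → ℝ} (hu : u ∈ rf.F) (c : ℝ) :
    rf.E (u + fun _ => c) (u + fun _ => c) = rf.E u u := by
  have hc : (fun _ : X => c) ∈ rf.F := rf.const_mem c
  have h1 := E_add_split rf hu hc
  have h2 : (rf.E u (fun _ => c)) ^ 2 ≤ rf.E u u * rf.E (fun _ => c) (fun _ => c) :=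
    E_cs rf hu hc
  rw [E_const rf c] at h2
  have h3 : rf.E u (fun _ => c) = 0 := by nlinarith [sq_nonneg (rf.E u (fun _ => c))]
  rw [h1, h3, E_const rf c]; ring

/-- subtraction stays in F -/
lemma sub_mem_F (rf : ResistanceForm X) {u v : X → ℝ} (hu : u ∈ rf.F) (hv : v ∈ rf.F) :
    u - v ∈ rf.F := by
  have h : u - v = u + (-1 : ℝ) • v := by
    funext z; simp [sub_eq_add_neg]
  rw [h]; exact rf.add_mem hu (rf.smul_mem _ hv)

/-- the unit truncation as a real function -/
noncomputable def tr (t : ℝ) : ℝ := max 0 (min 1 t)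

lemma tr_mem (rf : ResistanceForm X) {u : X → ℝ} (hu : u ∈ rf.F) :
    (fun z => tr (u z)) ∈ rf.F := (rf.markov u hu).1

lemma tr_E_le (rf : ResistanceForm X) {u : X → ℝ} (hu : u ∈ rf.F) :
    rf.E (fun z => tr (u z)) (fun z => tr (u z)) ≤ rf.E u u := (rf.markov u hu).2

lemma tr_nonneg (t : ℝ) : 0 ≤ tr t := le_max_left _ _

lemma tr_le_one (t : ℝ) : tr t ≤ 1 := by
  rw [tr, max_le_iff]
  exact ⟨zero_le_one, min_le_left _ _⟩

lemma tr_one : tr 1 = 1 := by norm_num [tr]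

lemma tr_of_nonpos {t : ℝ} (h : t ≤ 0) : tr t = 0 := by
  rw [tr]
  rw [min_eq_right (by linarith)]
  exact max_eq_left h

lemma tr_le_abs (t : ℝ) : tr t ≤ |t| := by
  rcases le_total t 0 with h | h
  · rw [tr_of_nonpos h]; exact abs_nonneg t
  · rw [tr, abs_of_nonneg h, max_le_iff]
    exact ⟨h, min_le_right _ _⟩

lemma tr_lipschitz (a b : ℝ) : |tr a - tr b| ≤ |a - b| := by
  suffices H : ∀ s t : ℝ, t ≤ s → tr s - tr t ≤ s - t ∧ 0 ≤ tr s - tr t by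
    rcases le_total b a with h | h
    · obtain ⟨h1, h2⟩ := H a b h
      rw [abs_of_nonneg h2, abs_of_nonneg (by linarith : (0:ℝ) ≤ a - b)]
      exact h1
    · obtain ⟨h1, h2⟩ := H b a h
      rw [abs_sub_comm, abs_sub_comm a b, abs_of_nonneg h2,
        abs_of_nonneg (by linarith : (0:ℝ) ≤ b - a)]
      exact h1
  intro s t hts
  unfold tr
  constructor <;>
  · rcases le_total s 0 with h1 | h1 <;> rcases le_total t 0 with h2 | h2 <;>
      rcases le_total s 1 with h3 | h3 <;> rcases le_total t 1 with h4 | h4 <;>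
      simp only [max_def, min_def] <;> split_ifs <;> linarith

/-- two-point resistance bound: (u a − u b)² ≤ R(a,b) E(u,u). -/
lemma pair_sq (rf : ResistanceForm X) {u : X → ℝ} (hu : u ∈ rf.F) (a b : X) :
    (u a - u b) ^ 2 ≤ rf.rmetric a b * rf.E u u := by
  classical
  by_cases hab : a = b
  · subst hab; simp [ResistanceForm.rmetric, rf.nonneg u hu]
  · rcases eq_or_ne (u a) (u b) with hc | hc
    · rw [hc]
      have h1 : 0 < sInf {e : ℝ | ∃ w ∈ rf.F, w a = 1 ∧ w b = 0 ∧ rf.E w w = e} :=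
        rf.inf_pos a b hab
      have h2 : 0 ≤ rf.rmetric a b := by
        rw [ResistanceForm.rmetric, if_neg hab]
        positivity
      simpa using mul_nonneg h2 (rf.nonneg u hu)
    · set c := u a - u b with hcdef
      have hc0 : c ≠ 0 := sub_ne_zero_of_ne hc
      set v : X → ℝ := c⁻¹ • (u + fun _ => -(u b)) with hv
      have hvF : v ∈ rf.F := rf.smul_mem _ (rf.add_mem hu (rf.const_mem _))
      have hva : v a = 1 := by
        simp only [hv, Pi.smul_apply, Pi.add_apply, smul_eq_mul]
        field_simp
        rw [hcdef]; ring
      have hvb : v b = 0 := by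
        simp only [hv, Pi.smul_apply, Pi.add_apply, smul_eq_mul]
        ring
      have hEv : rf.E v v = c⁻¹ ^ 2 * rf.E u u := by
        rw [hv, E_smul rf (rf.add_mem hu (rf.const_mem _)), E_add_const rf hu]
      have hmem : rf.E v v ∈ {e : ℝ | ∃ w ∈ rf.F, w a = 1 ∧ w b = 0 ∧ rf.E w w = e} :=
        ⟨v, hvF, hva, hvb, rfl⟩
      have hpos : 0 < sInf {e : ℝ | ∃ w ∈ rf.F, w a = 1 ∧ w b = 0 ∧ rf.E w w = e} :=
        rf.inf_pos a b hab
      have hbdd : BddBelow {e : ℝ | ∃ w ∈ rf.F, w a = 1 ∧ w b = 0 ∧ rf.E w w = e} := by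
        refine ⟨0, fun e he => ?_⟩
        obtain ⟨w, hw, _, _, hwe⟩ := he
        rw [← hwe]; exact rf.nonneg w hw
      have hle : sInf {e : ℝ | ∃ w ∈ rf.F, w a = 1 ∧ w b = 0 ∧ rf.E w w = e} ≤ rf.E v v :=
        csInf_le hbdd hmem
      have hrm : rf.rmetric a b =
          (sInf {e : ℝ | ∃ w ∈ rf.F, w a = 1 ∧ w b = 0 ∧ rf.E w w = e})⁻¹ := by
        rw [ResistanceForm.rmetric, if_neg hab]
      rw [hrm]
      rw [hEv] at hle
      have hc2 : (0:ℝ) < c ^ 2 := by positivity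
      have h2 : c ^ 2 * sInf {e : ℝ | ∃ w ∈ rf.F, w a = 1 ∧ w b = 0 ∧ rf.E w w = e}
          ≤ rf.E u u := by
        have h3 := mul_le_mul_of_nonneg_left hle (le_of_lt hc2)
        have h4 : c ^ 2 * (c⁻¹ ^ 2 * rf.E u u) = rf.E u u := by
          field_simp
        exact le_of_le_of_eq h3 h4
      calc c ^ 2 = (sInf {e : ℝ | ∃ w ∈ rf.F, w a = 1 ∧ w b = 0 ∧ rf.E w w = e})⁻¹ *
            (c ^ 2 * sInf {e : ℝ | ∃ w ∈ rf.F, w a = 1 ∧ w b = 0 ∧ rf.E w w = e}) := by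
            field_simp
        _ ≤ _ := mul_le_mul_of_nonneg_left h2 (inv_nonneg.mpr hpos.le)

end RFAux
namespace RFAux

variable {X : Type*}

/-- near-minimizer for a pair, with energy at most twice the reciprocal resistance -/
lemma near_min (rf : ResistanceForm X) {x p : X} (hxp : x ≠ p) (hpos : 0 < rf.rmetric x p) :
    ∃ u ∈ rf.F, u x = 1 ∧ u p = 0 ∧ rf.E u u ≤ 2 / rf.rmetric x p := by
  classical
  set S := {e : ℝ | ∃ w ∈ rf.F, w x = 1 ∧ w p = 0 ∧ rf.E w w = e} with hS
  have hne : S.Nonempty := by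
    obtain ⟨u, hu, h1, h0⟩ := rf.exists_unit x p hxp
    exact ⟨rf.E u u, u, hu, h1, h0, rfl⟩
  have hrm : rf.rmetric x p = (sInf S)⁻¹ := by
    rw [ResistanceForm.rmetric, if_neg hxp]
  have hInf : sInf S = (rf.rmetric x p)⁻¹ := by rw [hrm, inv_inv]
  obtain ⟨e, heS, helt⟩ := Real.lt_sInf_add_pos hne (by positivity :
    (0:ℝ) < (rf.rmetric x p)⁻¹)
  obtain ⟨u, hu, h1, h0, hEe⟩ := heS
  refine ⟨u, hu, h1, h0, ?_⟩
  rw [← hEe, hInf] at helt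
  rw [div_eq_mul_inv]
  linarith

lemma geom_half_sum (c : ℝ) (hc : 0 ≤ c) (n : ℕ) :
    ∑ k ∈ Finset.range n, c * (1 / 2 : ℝ) ^ k ≤ 2 * c := by
  rw [← Finset.mul_sum]
  have h := sum_geometric_two_le n
  nlinarith [h]

section Metric
variable [MetricSpace X]

/-- iterated doubling: a ball of radius 2^j t is covered by N^j balls of radius t -/
lemma cover_iter {N : ℕ} (hdb : ∀ (x : X) (r : ℝ), ∃ s : Finset X, s.card ≤ N ∧
      {y : X | dist x y < 2 * r} ⊆ ⋃ z ∈ s, {y : X | dist z y < r}) :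
    ∀ (j : ℕ) (x : X) (t : ℝ), ∃ s : Finset X, s.card ≤ N ^ j ∧
      {y : X | dist x y < 2 ^ j * t} ⊆ ⋃ z ∈ s, {y : X | dist z y < t} := by
  classical
  intro j
  induction j with
  | zero =>
      intro x t
      exact ⟨{x}, by simp, by simp⟩
  | succ j ih =>
      intro x t
      obtain ⟨s₀, hs₀c, hs₀⟩ := hdb x (2 ^ j * t)
      choose g hgc hgsub using fun z => ih z t
      refine ⟨s₀.biUnion g, ?_, ?_⟩
      · calc (s₀.biUnion g).card ≤ ∑ z ∈ s₀, (g z).card := Finset.card_biUnion_le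
          _ ≤ ∑ _z ∈ s₀, N ^ j := Finset.sum_le_sum (fun z _ => hgc z)
          _ = s₀.card * N ^ j := by rw [Finset.sum_const, smul_eq_mul]
          _ ≤ N * N ^ j := Nat.mul_le_mul_right _ hs₀c
          _ = N ^ (j + 1) := by ring
      · intro y hy
        have hy' : y ∈ {y : X | dist x y < 2 * (2 ^ j * t)} := by
          simp only [Set.mem_setOf_eq] at hy ⊢
          calc dist x y < 2 ^ (j+1) * t := hy
            _ = 2 * (2 ^ j * t) := by ring
        obtain ⟨U, ⟨z, rfl⟩, hU⟩ := hs₀ hy'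
        simp only [Set.mem_iUnion, exists_prop] at hU
        obtain ⟨hz, hdy⟩ := hU
        have := hgsub z (Set.mem_setOf_eq ▸ hdy)
        simp only [Set.mem_iUnion, exists_prop] at this ⊢
        obtain ⟨w, hw, hwy⟩ := this
        exact ⟨w, Finset.mem_biUnion.mpr ⟨z, hz, hw⟩, hwy⟩

/-- greedy separated net inside a finite set -/
lemma sep_net (s : Finset X) (δ : ℝ) (hδ : 0 < δ) :
    ∃ P ⊆ s, (∀ w ∈ s, ∃ p ∈ P, dist p w < δ) ∧
      (∀ p ∈ P, ∀ q ∈ P, p ≠ q → δ ≤ dist p q) := by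
  classical
  suffices H : ∀ (n : ℕ) (s : Finset X), s.card ≤ n →
      ∃ P ⊆ s, (∀ w ∈ s, ∃ p ∈ P, dist p w < δ) ∧
        (∀ p ∈ P, ∀ q ∈ P, p ≠ q → δ ≤ dist p q) by
    exact H s.card s le_rfl
  intro n
  induction n with
  | zero =>
      intro s hs
      rw [Nat.le_zero, Finset.card_eq_zero] at hs
      subst hs
      exact ⟨∅, Finset.Subset.refl _, by simp, by simp⟩
  | succ n ih =>
      intro s hs
      rcases Finset.eq_empty_or_nonempty s with rfl | ⟨a, ha⟩
      · exact ⟨∅, Finset.Subset.refl _, by simp, by simp⟩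
      · set s' := s.filter (fun w => δ ≤ dist a w) with hs'
        have hss : s' ⊆ s.erase a := by
          intro w hw
          rw [hs', Finset.mem_filter] at hw
          refine Finset.mem_erase.mpr ⟨?_, hw.1⟩
          intro h; subst h
          have := hw.2
          rw [dist_self] at this
          linarith
        have hcard : s'.card ≤ n := by
          have h1 : s'.card ≤ (s.erase a).card := Finset.card_le_card hss
          have h2 : (s.erase a).card < s.card := Finset.card_erase_lt_of_mem ha
          omega
        obtain ⟨P', hP's, hP'cov, hP'sep⟩ := ih s' hcard
        have hP'sub : P' ⊆ s' := hP's
        refine ⟨insert a P', ?_, ?_, ?_⟩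
        · intro p hp
          rcases Finset.mem_insert.mp hp with rfl | hp'
          · exact ha
          · exact Finset.mem_of_mem_erase (hss (hP'sub hp'))
        · intro w hw
          by_cases hd : dist a w < δ
          · exact ⟨a, Finset.mem_insert_self _ _, hd⟩
          · have hw' : w ∈ s' := Finset.mem_filter.mpr ⟨hw, le_of_not_gt hd⟩
            obtain ⟨p, hp, hpd⟩ := hP'cov w hw'
            exact ⟨p, Finset.mem_insert_of_mem hp, hpd⟩
        · intro p hp q hq hpq
          rcases Finset.mem_insert.mp hp with rfl | hp' <;>
            rcases Finset.mem_insert.mp hq with rfl | hq'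
          · exact absurd rfl hpq
          · exact (Finset.mem_filter.mp (hP'sub hq')).2
          · have := (Finset.mem_filter.mp (hP'sub hp')).2
            rwa [dist_comm]
          · exact hP'sep p hp' q hq' hpq

end Metric

end RFAux
namespace RFAux

variable {X : Type*} [MetricSpace X]

/-- The key geometric construction: a `[0,1]`-valued function in `F` which is `1` at `x`,
vanishes on any given finite set `W` lying outside `B(x,r)`, with energy `≲ 1/r`. -/
lemma exists_cutoff (rf : ResistanceForm X)
    (hR : ∀ x y : X, dist x y = rf.rmetric x y) {N : ℕ}
    (hdb : ∀ (x : X) (r : ℝ), ∃ s : Finset X, s.card ≤ N ∧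
      {y : X | dist x y < 2 * r} ⊆ ⋃ z ∈ s, {y : X | dist z y < r})
    (x : X) (r : ℝ) (hr : 0 < r) (W : Finset X) (hW : ∀ w ∈ W, r ≤ dist x w) :
    ∃ φ ∈ rf.F, φ x = 1 ∧ (∀ w ∈ W, φ w = 0) ∧ (∀ z, 0 ≤ φ z ∧ φ z ≤ 1) ∧
      rf.E φ φ ≤ 32 * ((N : ℝ) ^ 6) ^ 2 / r := by
  classical
  set M : ℝ := (N : ℝ) ^ 6 with hM
  have hM0 : 0 ≤ M := by positivity
  -- choose the top scale K
  obtain ⟨K, hK⟩ : ∃ K : ℕ, ∀ w ∈ W, dist x w < 4 ^ K * r := by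
    set D : ℝ := 1 + ∑ w ∈ W, dist x w with hD
    have hDw : ∀ w ∈ W, dist x w < D := by
      intro w hw
      have h1 : dist x w ≤ ∑ w ∈ W, dist x w :=
        Finset.single_le_sum (f := fun w => dist x w) (fun i _ => dist_nonneg) hw
      rw [hD]; linarith
    obtain ⟨K, hK⟩ := pow_unbounded_of_one_lt (D / r) (by norm_num : (1:ℝ) < 4)
    refine ⟨K, fun w hw => ?_⟩
    have := hDw w hw
    have h2 : D < 4 ^ K * r := by
      rw [div_lt_iff₀ hr] at hK
      linarith
    linarith
  -- annuli
  set Wk : ℕ → Finset X := fun k =>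
    W.filter (fun w => 4 ^ k * r ≤ dist x w ∧ dist x w < 4 ^ (k+1) * r) with hWk
  -- separated nets in each annulus
  have hδpos : ∀ k : ℕ, (0:ℝ) < 4 ^ k * r / 8 := by
    intro k; positivity
  have hsep : ∀ k : ℕ, ∃ P ⊆ Wk k, (∀ w ∈ Wk k, ∃ p ∈ P, dist p w < 4 ^ k * r / 8) ∧
      (∀ p ∈ P, ∀ q ∈ P, p ≠ q → 4 ^ k * r / 8 ≤ dist p q) :=
    fun k => sep_net (Wk k) _ (hδpos k)
  choose P hPsub hPcov hPsep using hsep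
  -- cardinality bound via iterated doubling
  have hPcard : ∀ k : ℕ, ((P k).card : ℝ) ≤ M := by
    intro k
    obtain ⟨s, hscard, hscov⟩ := cover_iter hdb 6 x (4 ^ k * r / 16)
    have hsub : ∀ p ∈ P k, p ∈ {y : X | dist x y < 2 ^ 6 * (4 ^ k * r / 16)} := by
      intro p hp
      have hpW : p ∈ Wk k := hPsub k hp
      rw [hWk, Finset.mem_filter] at hpW
      have h2 : (2:ℝ) ^ 6 * (4 ^ k * r / 16) = 4 ^ (k+1) * r := by ring
      rw [Set.mem_setOf_eq, h2]
      exact hpW.2.2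
    have hz : ∀ p : X, ∃ z, p ∈ P k → z ∈ s ∧ dist z p < 4 ^ k * r / 16 := by
      intro p
      by_cases hp : p ∈ P k
      · have := hscov (hsub p hp)
        simp only [Set.mem_iUnion, exists_prop, Set.mem_setOf_eq] at this
        obtain ⟨z, hzs, hzd⟩ := this
        exact ⟨z, fun _ => ⟨hzs, hzd⟩⟩
      · exact ⟨x, fun h => absurd h hp⟩
    choose z hzp using hz
    have hinj : Set.InjOn z (P k) := by
      intro p hp q hq hzeq
      by_contra hne
      have h1 := (hzp p) hp
      have h2 := (hzp q) hq
      have hd := hPsep k p hp q hq hne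
      have := dist_triangle p (z p) q
      rw [dist_comm p (z p), hzeq] at this
      rw [hzeq] at h1
      linarith [h1.2, h2.2, hd, this]
    have hcard : (P k).card ≤ s.card :=
      Finset.card_le_card_of_injOn z (fun p hp => (hzp p hp).1) hinj
    calc ((P k).card : ℝ) ≤ (s.card : ℝ) := by exact_mod_cast hcard
      _ ≤ ((N ^ 6 : ℕ) : ℝ) := by exact_mod_cast hscard
      _ = M := by push_cast [hM]; ring
  -- disjointness of the nets
  have hWkdisj : ∀ k k' : ℕ, k ≠ k' → Disjoint (P k) (P k') := by
    intro k k' hkk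
    rw [Finset.disjoint_left]
    intro a hak hak'
    have h1 := Finset.mem_filter.mp (hPsub k hak)
    have h2 := Finset.mem_filter.mp (hPsub k' hak')
    rcases Nat.lt_or_ge k k' with h | h
    · have hle : (4:ℝ) ^ (k+1) ≤ 4 ^ k' :=
        pow_le_pow_right₀ (by norm_num) h
      have := h1.2.2
      have := h2.2.1
      nlinarith [hr, hle]
    · have hkk' : k' < k := lt_of_le_of_ne h (Ne.symm hkk)
      have hle : (4:ℝ) ^ (k'+1) ≤ 4 ^ k :=
        pow_le_pow_right₀ (by norm_num) hkk'
      have := h2.2.2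
      have := h1.2.1
      nlinarith [hr, hle]
  -- the total net
  set Ptot : Finset X := (Finset.range K).biUnion P with hPtot
  have hPtotW : ∀ p ∈ Ptot, p ∈ W := by
    intro p hp
    rw [hPtot, Finset.mem_biUnion] at hp
    obtain ⟨k, _, hpk⟩ := hp
    exact Finset.mem_of_mem_filter p (hPsub k hpk)
  -- near-minimizing two-point functions
  have hu : ∀ p : X, ∃ u, p ∈ W → (u ∈ rf.F ∧ u x = 1 ∧ u p = 0 ∧
      rf.E u u ≤ 2 / dist x p) := by
    intro p
    by_cases hp : p ∈ W
    · have hd : 0 < dist x p := lt_of_lt_of_le hr (hW p hp)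
      have hxp : x ≠ p := by
        intro h; rw [h, dist_self] at hd; exact lt_irrefl _ hd
      have hrm : 0 < rf.rmetric x p := by rw [← hR]; exact hd
      obtain ⟨u, huF, hu1, hu0, huE⟩ := near_min rf hxp hrm
      refine ⟨u, fun _ => ⟨huF, hu1, hu0, ?_⟩⟩
      rw [← hR] at huE
      exact huE
    · exact ⟨0, fun h => absurd h hp⟩
  choose u huprop using hu
  -- truncated versions
  set v : X → (X → ℝ) := fun p => (fun z => tr (u p z)) with hv
  have hvF : ∀ p ∈ W, v p ∈ rf.F := fun p hp => tr_mem rf ((huprop p hp).1)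
  have hvx : ∀ p ∈ W, v p x = 1 := by
    intro p hp
    simp only [hv]
    rw [(huprop p hp).2.1, tr_one]
  have hvE : ∀ p ∈ W, rf.E (v p) (v p) ≤ 2 / dist x p := by
    intro p hp
    exact le_trans (tr_E_le rf (huprop p hp).1) (huprop p hp).2.2.2
  -- the sum
  set ψ : X → ℝ := ∑ p ∈ Ptot, v p with hψ
  have hψF : ψ ∈ rf.F := sum_mem_F rf Ptot v (fun p hp => hvF p (hPtotW p hp))
  -- energy bound on ψ
  have hsqrtv : ∀ k ∈ Finset.range K, ∀ p ∈ P k,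
      Real.sqrt (rf.E (v p) (v p)) ≤ Real.sqrt (2 / r) * (1 / 2) ^ k := by
    intro k _ p hp
    have hpW : p ∈ W := Finset.mem_of_mem_filter p (hPsub k hp)
    have hpWk := Finset.mem_filter.mp (hPsub k hp)
    have hdp : (4:ℝ) ^ k * r ≤ dist x p := hpWk.2.1
    have hdp0 : (0:ℝ) < 4 ^ k * r := by positivity
    have h1 : rf.E (v p) (v p) ≤ 2 / (4 ^ k * r) :=
      le_trans (hvE p hpW) (div_le_div_of_nonneg_left (by norm_num)
        hdp0 hdp)
    have hq4 : ((1:ℝ) / 2) ^ k * ((1:ℝ) / 2) ^ k = (1 / 4) ^ k := by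
      rw [← mul_pow]; norm_num
    have h2 : (2:ℝ) / (4 ^ k * r) = 2 / r * ((1 / 2) ^ k) ^ 2 := by
      rw [sq, hq4, one_div_pow]
      have h4 : ((4:ℝ) ^ k) ≠ 0 := by positivity
      field_simp
    calc Real.sqrt (rf.E (v p) (v p)) ≤ Real.sqrt (2 / (4 ^ k * r)) :=
          Real.sqrt_le_sqrt h1
      _ = Real.sqrt (2 / r) * (1 / 2) ^ k := by
          rw [h2, Real.sqrt_mul (by positivity), Real.sqrt_sq (by positivity)]
  have hT : Real.sqrt (rf.E ψ ψ) ≤ 2 * (M * Real.sqrt (2 / r)) := by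
    have h1 : Real.sqrt (rf.E ψ ψ) ≤ ∑ p ∈ Ptot, Real.sqrt (rf.E (v p) (v p)) := by
      rw [hψ]
      exact sqrt_E_sum rf Ptot v (fun p hp => hvF p (hPtotW p hp))
    have h2 : ∑ p ∈ Ptot, Real.sqrt (rf.E (v p) (v p)) =
        ∑ k ∈ Finset.range K, ∑ p ∈ P k, Real.sqrt (rf.E (v p) (v p)) := by
      rw [hPtot]
      exact Finset.sum_biUnion (fun k _ k' _ hkk => hWkdisj k k' hkk)
    have h3 : ∑ k ∈ Finset.range K, ∑ p ∈ P k, Real.sqrt (rf.E (v p) (v p)) ≤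
        ∑ k ∈ Finset.range K, (M * Real.sqrt (2 / r)) * (1 / 2) ^ k := by
      refine Finset.sum_le_sum (fun k hk => ?_)
      calc ∑ p ∈ P k, Real.sqrt (rf.E (v p) (v p))
          ≤ ∑ _p ∈ P k, Real.sqrt (2 / r) * (1 / 2) ^ k :=
            Finset.sum_le_sum (fun p hp => hsqrtv k hk p hp)
        _ = ((P k).card : ℝ) * (Real.sqrt (2 / r) * (1 / 2) ^ k) := by
            rw [Finset.sum_const, nsmul_eq_mul]
        _ ≤ M * (Real.sqrt (2 / r) * (1 / 2) ^ k) := by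
            have := hPcard k
            have hnn : (0:ℝ) ≤ Real.sqrt (2 / r) * (1 / 2) ^ k := by positivity
            nlinarith
        _ = (M * Real.sqrt (2 / r)) * (1 / 2) ^ k := by ring
    have h4 := geom_half_sum (M * Real.sqrt (2 / r)) (by positivity) K
    linarith
  have hEψ : rf.E ψ ψ ≤ 8 * M ^ 2 / r := by
    have h0 : 0 ≤ rf.E ψ ψ := rf.nonneg ψ hψF
    have h1 : rf.E ψ ψ = Real.sqrt (rf.E ψ ψ) ^ 2 := (Real.sq_sqrt h0).symm
    have h2 : Real.sqrt (rf.E ψ ψ) ^ 2 ≤ (2 * (M * Real.sqrt (2 / r))) ^ 2 := by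
      have := Real.sqrt_nonneg (rf.E ψ ψ)
      nlinarith [hT]
    have h3 : Real.sqrt (2 / r) ^ 2 = 2 / r := Real.sq_sqrt (by positivity)
    rw [h1]
    calc Real.sqrt (rf.E ψ ψ) ^ 2 ≤ (2 * (M * Real.sqrt (2 / r))) ^ 2 := h2
      _ = 4 * M ^ 2 * Real.sqrt (2 / r) ^ 2 := by ring
      _ = 8 * M ^ 2 / r := by rw [h3]; ring
  -- number of net points
  set n : ℕ := Ptot.card with hn
  -- the preliminary function
  set χ : X → ℝ := (2:ℝ) • ψ + (fun _ => 1 - 2 * (n:ℝ)) with hχ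
  have hχF : χ ∈ rf.F := rf.add_mem (rf.smul_mem 2 hψF) (rf.const_mem _)
  set φ : X → ℝ := fun z => tr (χ z) with hφ
  have hφF : φ ∈ rf.F := tr_mem rf hχF
  have hψx : ψ x = (n:ℝ) := by
    rw [hψ, Finset.sum_apply]
    rw [Finset.sum_congr rfl (fun p hp => hvx p (hPtotW p hp))]
    rw [Finset.sum_const, nsmul_eq_mul, mul_one, hn]
  have hφx : φ x = 1 := by
    rw [hφ]
    simp only [hχ, Pi.add_apply, Pi.smul_apply, smul_eq_mul]
    rw [hψx]
    have : (2:ℝ) * (n:ℝ) + (1 - 2 * (n:ℝ)) = 1 := by ring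
    rw [this, tr_one]
  -- vanishing on W
  have hφW : ∀ w ∈ W, φ w = 0 := by
    intro w hw
    -- find the annulus of w
    set k : ℕ := Nat.findGreatest (fun k => 4 ^ k * r ≤ dist x w) K with hk
    have hP0 : (4:ℝ) ^ 0 * r ≤ dist x w := by
      rw [pow_zero, one_mul]; exact hW w hw
    have hPk : (4:ℝ) ^ k * r ≤ dist x w := by
      have h := Nat.findGreatest_spec (P := fun k => 4 ^ k * r ≤ dist x w)
        (Nat.zero_le K) hP0
      simpa [hk] using h
    have hkK : k < K := by
      have hle : k ≤ K := Nat.findGreatest_le K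
      rcases lt_or_eq_of_le hle with h | h
      · exact h
      · exfalso
        have hKw := hK w hw
        rw [h] at hPk
        linarith
    have hup : dist x w < 4 ^ (k+1) * r := by
      by_contra hcon
      push_neg at hcon
      have hlt : Nat.findGreatest (fun k => 4 ^ k * r ≤ dist x w) K < k + 1 := by
        rw [← hk]; omega
      have := Nat.findGreatest_is_greatest (P := fun k => 4 ^ k * r ≤ dist x w)
        hlt (by omega)
      exact this hcon
    have hwWk : w ∈ Wk k := by
      rw [hWk, Finset.mem_filter]
      exact ⟨hw, hPk, hup⟩
    obtain ⟨p₀, hp₀, hp₀d⟩ := hPcov k w hwWk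
    have hp₀tot : p₀ ∈ Ptot := by
      rw [hPtot, Finset.mem_biUnion]
      exact ⟨k, Finset.mem_range.mpr hkK, hp₀⟩
    have hp₀W : p₀ ∈ W := hPtotW p₀ hp₀tot
    -- v p₀ is small at w
    have hsmall : v p₀ w ≤ 1 / 2 := by
      have hu₀ := huprop p₀ hp₀W
      have hpair := pair_sq rf hu₀.1 w p₀
      rw [← hR, hu₀.2.2.1, sub_zero] at hpair
      have hdp : (4:ℝ) ^ k * r ≤ dist x p₀ :=
        (Finset.mem_filter.mp (hPsub k hp₀)).2.1
      have hdp0 : (0:ℝ) < 4 ^ k * r := by positivity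
      have hE2 : rf.E (u p₀) (u p₀) ≤ 2 / (4 ^ k * r) :=
        le_trans hu₀.2.2.2 (div_le_div_of_nonneg_left (by norm_num) hdp0 hdp)
      have hEnn : 0 ≤ rf.E (u p₀) (u p₀) := rf.nonneg _ hu₀.1
      have hq : (u p₀ w) ^ 2 ≤ 1 / 4 := by
        calc (u p₀ w) ^ 2 ≤ dist w p₀ * rf.E (u p₀) (u p₀) := hpair
          _ ≤ (4 ^ k * r / 8) * (2 / (4 ^ k * r)) := by
              rw [dist_comm w p₀]
              apply mul_le_mul (le_of_lt hp₀d) hE2 hEnn (by positivity)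
          _ = 1 / 4 := by field_simp; ring
      have habs : |u p₀ w| ≤ 1 / 2 := by
        rw [← Real.sqrt_sq_eq_abs]
        calc Real.sqrt ((u p₀ w) ^ 2) ≤ Real.sqrt (1 / 4) := Real.sqrt_le_sqrt hq
          _ = 1 / 2 := by
              rw [show (1/4:ℝ) = (1/2)^2 by norm_num, Real.sqrt_sq (by norm_num)]
      calc v p₀ w ≤ |u p₀ w| := tr_le_abs _
        _ ≤ 1 / 2 := habs
    -- hence ψ w ≤ n − 1/2
    have hψw : ψ w ≤ (n:ℝ) - 1 / 2 := by
      rw [hψ, Finset.sum_apply]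
      have hsplit : v p₀ w + ∑ p ∈ Ptot.erase p₀, v p w = ∑ p ∈ Ptot, v p w :=
        Finset.add_sum_erase Ptot (fun p => v p w) hp₀tot
      have hbound : ∑ p ∈ Ptot.erase p₀, v p w ≤ ((Ptot.erase p₀).card : ℝ) * 1 := by
        have := Finset.sum_le_card_nsmul (Ptot.erase p₀) (fun p => v p w) 1
          (fun p _ => tr_le_one _)
        rw [nsmul_eq_mul] at this
        exact this
      have hcarde : ((Ptot.erase p₀).card : ℝ) = (n:ℝ) - 1 := by
        rw [Finset.card_erase_of_mem hp₀tot, hn]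
        have : 1 ≤ Ptot.card := Finset.card_pos.mpr ⟨p₀, hp₀tot⟩
        push_cast [Nat.cast_sub this]
        ring
      rw [← hsplit]
      rw [hcarde, mul_one] at hbound
      linarith [hsmall, hbound]
    rw [hφ]
    simp only [hχ, Pi.add_apply, Pi.smul_apply, smul_eq_mul]
    apply tr_of_nonpos
    linarith [hψw]
  -- range
  have hφrange : ∀ z, 0 ≤ φ z ∧ φ z ≤ 1 := fun z => ⟨tr_nonneg _, tr_le_one _⟩
  -- energy of φ
  have hEφ : rf.E φ φ ≤ 32 * M ^ 2 / r := by
    have h1 : rf.E φ φ ≤ rf.E χ χ := tr_E_le rf hχF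
    have h2 : rf.E χ χ = 4 * rf.E ψ ψ := by
      rw [hχ, E_add_const rf (rf.smul_mem 2 hψF), E_smul rf hψF]
      norm_num
    calc rf.E φ φ ≤ 4 * rf.E ψ ψ := by rw [← h2]; exact h1
      _ ≤ 4 * (8 * M ^ 2 / r) := by linarith [hEψ]
      _ = 32 * M ^ 2 / r := by ring
  exact ⟨φ, hφF, hφx, hφW, hφrange, hEφ⟩

end RFAux
namespace RFAux

variable {X : Type*}

/-- bump functions: 1 at `a`, 0 on a finite set avoiding `a`, values in [0,1] -/
lemma exists_bump (rf : ResistanceForm X) (s : Finset X) (a : X) (ha : a ∉ s) :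
    ∃ v ∈ rf.F, v a = 1 ∧ (∀ b ∈ s, v b = 0) ∧ ∀ z, 0 ≤ v z ∧ v z ≤ 1 := by
  classical
  induction s using Finset.induction_on with
  | empty =>
      exact ⟨fun _ => 1, rf.const_mem 1, rfl, by simp, fun z => by norm_num⟩
  | insert b s' hbs ih =>
      have hab : a ≠ b := fun h => ha (h ▸ Finset.mem_insert_self b s')
      have has' : a ∉ s' := fun h => ha (Finset.mem_insert_of_mem h)
      obtain ⟨v, hvF, hva, hvs, hvr⟩ := ih has'
      obtain ⟨u0, hu0F, hu0a, hu0b⟩ := rf.exists_unit a b hab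
      set w : X → ℝ := fun z => tr (u0 z) with hw
      have hwF : w ∈ rf.F := tr_mem rf hu0F
      have hwa : w a = 1 := by rw [hw]; simp only; rw [hu0a, tr_one]
      have hwb : w b = 0 := by rw [hw]; simp only; rw [hu0b]; norm_num [tr]
      have hwr : ∀ z, 0 ≤ w z ∧ w z ≤ 1 := fun z => ⟨tr_nonneg _, tr_le_one _⟩
      set m : X → ℝ := fun z => min (v z) (w z) with hm
      have hmF : m ∈ rf.F := by
        have hsub : v - w ∈ rf.F := sub_mem_F rf hvF hwF
        have htr : (fun z => tr ((v - w) z)) ∈ rf.F := tr_mem rf hsub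
        have heq : m = v - (fun z => tr ((v - w) z)) := by
          funext z
          simp only [hm, Pi.sub_apply]
          rcases le_total (v z) (w z) with h | h
          · rw [min_eq_left h, tr_of_nonpos (by linarith)]
            ring
          · rw [min_eq_right h]
            have h1 : v z - w z ≤ 1 := by
              have := (hvr z).2; have := (hwr z).1; linarith
            have h2 : 0 ≤ v z - w z := by linarith
            rw [tr, min_eq_right h1, max_eq_right h2]
            ring
        rw [heq]
        exact sub_mem_F rf hvF htr
      refine ⟨m, hmF, ?_, ?_, ?_⟩
      · rw [hm]; simp only; rw [hva, hwa]; norm_num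
      · intro c hc
        rcases Finset.mem_insert.mp hc with rfl | hc'
        · rw [hm]; simp only; rw [hwb]
          exact min_eq_right (hvr c).1
        · rw [hm]; simp only; rw [hvs c hc']
          exact min_eq_left (hwr c).1
      · intro z
        constructor
        · exact le_min (hvr z).1 (hwr z).1
        · exact le_trans (min_le_left _ _) (hvr z).2

/-- surjectivity of the restriction map onto `ℓ(V)` -/
lemma exists_ext (rf : ResistanceForm X) (V : Finset X) (f : X → ℝ) :
    ∃ u ∈ rf.F, ∀ b ∈ V, u b = f b := by
  classical
  have hb : ∀ a : X, ∃ v, v ∈ rf.F ∧ (a ∈ V → (v a = 1 ∧ ∀ b ∈ V.erase a, v b = 0)) := by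
    intro a
    by_cases haV : a ∈ V
    · obtain ⟨v, hvF, hva, hvs, _⟩ := exists_bump rf (V.erase a) a (Finset.notMem_erase a V)
      exact ⟨v, hvF, fun _ => ⟨hva, hvs⟩⟩
    · exact ⟨0, rf.zero_mem, fun h => absurd h haV⟩
  choose v hvF hvprop using hb
  refine ⟨∑ a ∈ V, f a • v a, sum_mem_F rf V _ (fun a _ => rf.smul_mem _ (hvF a)), ?_⟩
  intro b hbV
  rw [Finset.sum_apply]
  rw [Finset.sum_eq_single b]
  · simp only [Pi.smul_apply, smul_eq_mul]
    rw [(hvprop b hbV).1, mul_one]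
  · intro a haV hab
    simp only [Pi.smul_apply, smul_eq_mul]
    rw [(hvprop a haV).2 b (Finset.mem_erase.mpr ⟨Ne.symm hab, hbV⟩), mul_zero]
  · intro h; exact absurd hbV h

lemma traceQ_nonneg (rf : ResistanceForm X) (Y : Set X) (f : X → ℝ) :
    0 ≤ rf.traceQ Y f := by
  apply Real.sInf_nonneg
  rintro e ⟨u, hu, _, he⟩
  rw [← he]; exact rf.nonneg u hu

lemma traceQ_bddBelow (rf : ResistanceForm X) (Y : Set X) (f : X → ℝ) :
    BddBelow {e : ℝ | ∃ u ∈ rf.F, (∀ z ∈ Y, u z = f z) ∧ rf.E u u = e} := by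
  refine ⟨0, ?_⟩
  rintro e ⟨u, hu, _, he⟩
  rw [← he]; exact rf.nonneg u hu

lemma traceQ_le (rf : ResistanceForm X) (Y : Set X) (f : X → ℝ) {u : X → ℝ}
    (hu : u ∈ rf.F) (hres : ∀ z ∈ Y, u z = f z) : rf.traceQ Y f ≤ rf.E u u :=
  csInf_le (traceQ_bddBelow rf Y f) ⟨u, hu, hres, rfl⟩

/-- monotonicity: the trace energy of an admissible function dominates the
two-point infimum -/
lemma pair_le_traceQ (rf : ResistanceForm X) (V : Finset X) (f : X → ℝ) {x y : X}
    (hx : x ∈ V) (hy : y ∈ V) (hfx : f x = 1) (hfy : f y = 0) :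
    sInf {e : ℝ | ∃ u ∈ rf.F, u x = 1 ∧ u y = 0 ∧ rf.E u u = e} ≤
      rf.traceQ (V : Set X) f := by
  classical
  obtain ⟨u₀, hu₀F, hu₀⟩ := exists_ext rf V f
  refine le_csInf ⟨rf.E u₀ u₀, u₀, hu₀F, fun z hz => hu₀ z hz, rfl⟩ ?_
  rintro e ⟨u, hu, hres, he⟩
  have hbdd : BddBelow {e : ℝ | ∃ u ∈ rf.F, u x = 1 ∧ u y = 0 ∧ rf.E u u = e} := by
    refine ⟨0, ?_⟩
    rintro e' ⟨w, hw, _, _, he'⟩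
    rw [← he']; exact rf.nonneg w hw
  refine csInf_le hbdd ⟨u, hu, ?_, ?_, he⟩
  · rw [hres x hx, hfx]
  · rw [hres y hy, hfy]

/-- the Markov property passes to the trace -/
lemma traceQ_trunc_le (rf : ResistanceForm X) (V : Finset X) (f : X → ℝ) :
    rf.traceQ (V : Set X) (fun z => tr (f z)) ≤ rf.traceQ (V : Set X) f := by
  classical
  obtain ⟨u₀, hu₀F, hu₀⟩ := exists_ext rf V f
  refine le_csInf ⟨rf.E u₀ u₀, u₀, hu₀F, fun z hz => hu₀ z hz, rfl⟩ ?_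
  rintro e ⟨u, hu, hres, he⟩
  calc rf.traceQ (V : Set X) (fun z => tr (f z)) ≤
        rf.E (fun z => tr (u z)) (fun z => tr (u z)) :=
        traceQ_le rf _ _ (tr_mem rf hu) (fun z hz => by rw [hres z hz])
    _ ≤ rf.E u u := tr_E_le rf hu
    _ = e := he

/-- nonnegativity of the off-diagonal resistance weights -/
lemma mu_nonneg (rf : ResistanceForm X) (V : Finset X) (μ : X → X → ℝ)
    (hμ : rf.IsResistanceWeights V μ) {p q : X} (hp : p ∈ V) (hq : q ∈ V)
    (hpq : p ≠ q) : 0 ≤ μ p q := by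
  classical
  obtain ⟨hsymm, _, hid⟩ := hμ
  set Q : (X → ℝ) → ℝ := fun f =>
    (1 / 2) * ∑ a ∈ V, ∑ b ∈ V, (f a - f b) * (f a - f b) * μ a b with hQ
  set ip : X → ℝ := fun z => if z = p then 1 else 0 with hip
  set iq : X → ℝ := fun z => if z = q then 1 else 0 with hiq
  -- the cross term
  have hcross : ∑ a ∈ V, ∑ b ∈ V, (ip a - ip b) * (iq a - iq b) * μ a b
      = -(2 * μ p q) := by
    have hinner : ∀ a ∈ V, ∑ b ∈ V, (ip a - ip b) * (iq a - iq b) * μ a b =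
        (if a = p then -(μ p q) else 0) + (if a = q then -(μ q p) else 0) := by
      intro a _
      by_cases hap : a = p
      · have haq : a ≠ q := by rw [hap]; exact hpq
        rw [if_pos hap, if_neg haq, Finset.sum_eq_single q]
        · simp only [hip, hiq, hap, eq_self_iff_true, if_true, if_neg hpq,
            if_neg (Ne.symm hpq)]
          ring
        · intro b _ hbq
          simp only [hip, hiq]
          rw [if_neg haq, if_neg hbq]
          ring
        · intro h; exact absurd hq h
      · rw [if_neg hap]
        by_cases haq : a = q
        · rw [if_pos haq, Finset.sum_eq_single p]
          · simp only [hip, hiq, haq, eq_self_iff_true, if_true, if_neg hpq,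
              if_neg (Ne.symm hpq)]
            ring
          · intro b _ hbp
            simp only [hip, hiq]
            rw [if_neg hap, if_neg hbp]
            ring
          · intro h; exact absurd hp h
        · rw [if_neg haq, Finset.sum_eq_zero]
          · norm_num
          · intro b _
            simp only [hip, hiq]
            rw [if_neg hap, if_neg haq]
            by_cases hbp : b = p
            · have hbq : b ≠ q := by rw [hbp]; exact hpq
              rw [if_neg hbq]
              ring
            · rw [if_neg hbp]
              ring
    rw [Finset.sum_congr rfl hinner, Finset.sum_add_distrib]
    rw [Finset.sum_ite_eq' V p (fun _ => -(μ p q)), Finset.sum_ite_eq' V q (fun _ => -(μ q p))]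
    rw [if_pos hp, if_pos hq, hsymm q p]
    ring
  -- Q of the combination
  have hQexp : ∀ s : ℝ, Q (fun z => ip z - s * iq z) =
      Q ip + s ^ 2 * Q iq + 2 * s * μ p q := by
    intro s
    rw [hQ]
    simp only
    have hptw : ∀ a ∈ V, ∀ b ∈ V,
        ((ip a - s * iq a) - (ip b - s * iq b)) * ((ip a - s * iq a) - (ip b - s * iq b)) * μ a b
        = (ip a - ip b) * (ip a - ip b) * μ a b
          + s ^ 2 * ((iq a - iq b) * (iq a - iq b) * μ a b)
          - 2 * s * ((ip a - ip b) * (iq a - iq b) * μ a b) := by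
      intro a _ b _
      ring
    rw [Finset.sum_congr rfl (fun a ha => Finset.sum_congr rfl (fun b hb => hptw a ha b hb))]
    have hsplit : ∀ a ∈ V, ∑ b ∈ V,
        ((ip a - ip b) * (ip a - ip b) * μ a b
          + s ^ 2 * ((iq a - iq b) * (iq a - iq b) * μ a b)
          - 2 * s * ((ip a - ip b) * (iq a - iq b) * μ a b))
        = (∑ b ∈ V, (ip a - ip b) * (ip a - ip b) * μ a b)
          + s ^ 2 * (∑ b ∈ V, (iq a - iq b) * (iq a - iq b) * μ a b)
          - 2 * s * (∑ b ∈ V, (ip a - ip b) * (iq a - iq b) * μ a b) := by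
      intro a _
      rw [Finset.sum_sub_distrib, Finset.sum_add_distrib, ← Finset.mul_sum, ← Finset.mul_sum]
    rw [Finset.sum_congr rfl hsplit, Finset.sum_sub_distrib, Finset.sum_add_distrib,
      ← Finset.mul_sum, ← Finset.mul_sum, hcross]
    ring
  -- truncation identity
  have htr : ∀ s : ℝ, 0 < s → (fun z => tr ((fun z => ip z - s * iq z) z)) = ip := by
    intro s hs
    funext z
    simp only [hip, hiq]
    by_cases hzp : z = p
    · have hzq : z ≠ q := by rw [hzp]; exact hpq
      rw [if_pos hzp, if_neg hzq, mul_zero, sub_zero, tr_one]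
    · rw [if_neg hzp]
      by_cases hzq : z = q
      · rw [if_pos hzq, mul_one, zero_sub, tr_of_nonpos (by linarith)]
      · rw [if_neg hzq, mul_zero, sub_zero, tr_of_nonpos (le_refl 0)]
  -- Markov inequality for Q
  have hkey : ∀ s : ℝ, 0 < s → 0 ≤ 2 * s * μ p q + s ^ 2 * Q iq := by
    intro s hs
    have h1 : rf.traceQ (V : Set X) ip ≤ rf.traceQ (V : Set X) (fun z => ip z - s * iq z) := by
      have := traceQ_trunc_le rf V (fun z => ip z - s * iq z)
      rwa [htr s hs] at this
    rw [hid ip, hid (fun z => ip z - s * iq z)] at h1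
    have h2 := hQexp s
    rw [hQ] at h2
    simp only at h2 h1
    rw [h2] at h1
    rw [hQ]
    simp only
    linarith
  -- conclude
  by_contra hneg
  push_neg at hneg
  have hQq : 0 ≤ Q iq := by
    rw [hQ]
    simp only
    rw [← hid iq]
    exact traceQ_nonneg rf _ _
  set s : ℝ := min 1 (-(μ p q) / (Q iq + 1)) with hs
  have hs0 : 0 < s := by
    apply lt_min
    · norm_num
    · apply div_pos (by linarith) (by linarith)
  have hs1 : s ≤ -(μ p q) / (Q iq + 1) := min_le_right _ _
  have hs2 : s * (Q iq + 1) ≤ -(μ p q) := by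
    exact (le_div_iff₀ (by linarith : (0:ℝ) < Q iq + 1)).mp hs1
  have hkey' := hkey s hs0
  nlinarith [hkey', hs0, hQq, hneg, hs2, mul_pos hs0 hs0]

end RFAux
namespace RFAux

lemma min_diff_sq (a b c e : ℝ) : (min a c - min b e) ^ 2 ≤ (a - b) ^ 2 + (c - e) ^ 2 := by
  rcases le_total a c with h1 | h1 <;> rcases le_total b e with h2 | h2 <;>
    [rw [min_eq_left h1, min_eq_left h2];
     rw [min_eq_left h1, min_eq_right h2];
     rw [min_eq_right h1, min_eq_left h2];
     rw [min_eq_right h1, min_eq_right h2]]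
  · nlinarith [sq_nonneg (c - e)]
  · nlinarith [sq_nonneg (c - b), mul_nonneg (sub_nonneg.2 h2) (sub_nonneg.2 h1)]
  · nlinarith [sq_nonneg (a - e), mul_nonneg (sub_nonneg.2 h2) (sub_nonneg.2 h1)]
  · nlinarith [sq_nonneg (a - b)]

lemma tr_diff_sq (a b : ℝ) : (tr a - tr b) ^ 2 ≤ (a - b) ^ 2 := by
  have h := tr_lipschitz a b
  calc (tr a - tr b) ^ 2 = |tr a - tr b| ^ 2 := (sq_abs _).symm
    _ ≤ |a - b| ^ 2 := by
        apply pow_le_pow_left₀ (abs_nonneg _) h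
    _ = (a - b) ^ 2 := sq_abs _

end RFAux

namespace RFAux

lemma sum_split {X : Type*} (V : Finset X) (pred : X → Prop) [DecidablePred pred]
    (T : X → X → ℝ) :
    ∑ a ∈ V, ∑ b ∈ V, T a b =
      ((∑ a ∈ V.filter pred, ∑ b ∈ V.filter pred, T a b) +
        ∑ a ∈ V.filter pred, ∑ b ∈ V.filter (fun z => ¬ pred z), T a b) +
      ((∑ a ∈ V.filter (fun z => ¬ pred z), ∑ b ∈ V.filter pred, T a b) +
        ∑ a ∈ V.filter (fun z => ¬ pred z), ∑ b ∈ V.filter (fun z => ¬ pred z), T a b) := by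
  have hinner : ∀ a : X, ∑ b ∈ V, T a b =
      (∑ b ∈ V.filter pred, T a b) + ∑ b ∈ V.filter (fun z => ¬ pred z), T a b :=
    fun a => (Finset.sum_filter_add_sum_filter_not V pred (T a)).symm
  have houter := Finset.sum_filter_add_sum_filter_not V pred (fun a => ∑ b ∈ V, T a b)
  calc ∑ a ∈ V, ∑ b ∈ V, T a b
      = (∑ a ∈ V.filter pred, ∑ b ∈ V, T a b) +
        ∑ a ∈ V.filter (fun z => ¬ pred z), ∑ b ∈ V, T a b := houter.symm
    _ = _ := by
        rw [Finset.sum_congr rfl (fun a _ => hinner a),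
          Finset.sum_congr rfl (fun a _ => hinner a),
          Finset.sum_add_distrib, Finset.sum_add_distrib]

end RFAux

namespace RFAux

lemma edge_bound {ga gb fa fb pa pb m : ℝ} (hm : 0 ≤ m)
    (h1 : (ga - gb) ^ 2 ≤ (fa - fb) ^ 2 + (pa - pb) ^ 2) :
    (ga - gb) * (ga - gb) * m ≤ (fa - fb) * (fa - fb) * m + (pa - pb) * (pa - pb) * m := by
  nlinarith [mul_le_mul_of_nonneg_right h1 hm]

end RFAux

open RFAux

open Classical in
/-- Under the standing assumptions, there is `α > 1` such that for every
nonempty finite `V ⊆ X`, the resistance weights `μ` of the trace `(E|_V, ℓ(V))`, and all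
`x, y ∈ V` with `x ≠ y`, one has `R_{V,B}(x,y) ≤ 2 R(x,y)` where `B = B_R(x, α R(x,y))`
and `R_{V,B}(x,y)⁻¹ = min {(1/2) ∑_{p,q ∈ B∩V} (f p - f q)² μ_{p,q} : f ∈ ℓ(V), f x = 1,
f y = 0}`. -/
theorem localized_resistance_le_two_rmetric {X : Type*} [MetricSpace X] [CompleteSpace X]
    (rf : ResistanceForm X) (hR : ∀ x y : X, dist x y = rf.rmetric x y)
    (hdb : DoublingOf fun x y : X => dist x y)
    (hup : UniformlyPerfectOf fun x y : X => dist x y) :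
    ∃ α : ℝ, 1 < α ∧ ∀ V : Finset X, V.Nonempty → ∀ μ : X → X → ℝ,
      rf.IsResistanceWeights V μ → ∀ x ∈ V, ∀ y ∈ V, x ≠ y →
      (sInf {e : ℝ | ∃ f : X → ℝ, f x = 1 ∧ f y = 0 ∧
          e = (1 / 2) * ∑ p ∈ V.filter (fun p => p ∈ Metric.ball x (α * dist x y)),
                ∑ q ∈ V.filter (fun q => q ∈ Metric.ball x (α * dist x y)),
                  (f p - f q) ^ 2 * μ p q})⁻¹ ≤ 2 * dist x y := by
  classical
  obtain ⟨N, hN⟩ := hdb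
  set Mc : ℝ := (N : ℝ) ^ 6 with hMc
  set C : ℝ := 32 * Mc ^ 2 with hC
  have hC0 : 0 ≤ C := by positivity
  refine ⟨4 * C + 2, by linarith, ?_⟩
  intro V hVne μ hμ x hx y hy hxy
  set α : ℝ := 4 * C + 2 with hα
  obtain ⟨hμsymm, hμdiag, hμid⟩ := hμ
  set d : ℝ := dist x y with hd
  have hd0 : 0 < d := dist_pos.mpr hxy
  have hα1 : (1:ℝ) < α := by rw [hα]; linarith
  set r : ℝ := α * d with hr
  have hr0 : 0 < r := by rw [hr]; positivity
  -- the ball predicate and the two blocks of V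
  set Bf : Finset X := V.filter (fun p => p ∈ Metric.ball x (α * dist x y)) with hBf
  set Wf : Finset X := V.filter (fun p => ¬ p ∈ Metric.ball x (α * dist x y)) with hWf
  -- the cutoff function
  have hWdist : ∀ w ∈ Wf, r ≤ dist x w := by
    intro w hw
    rw [hWf, Finset.mem_filter] at hw
    have h1 : ¬ dist w x < α * dist x y := fun h => hw.2 (Metric.mem_ball.mpr h)
    rw [dist_comm]
    rw [hr, hd]
    linarith [not_lt.mp h1]
  obtain ⟨φ, hφF, hφx, hφW, hφrange, hφE⟩ := exists_cutoff rf hR hN x r hr0 Wf hWdist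
  have hφE' : rf.E φ φ ≤ 1 / (4 * d) := by
    have h1 : 32 * ((N:ℝ) ^ 6) ^ 2 / r = C / (α * d) := by rw [hr, hC, hMc]
    rw [h1] at hφE
    have h2 : C / (α * d) ≤ 1 / (4 * d) := by
      rw [div_le_div_iff₀ (by positivity) (by positivity)]
      rw [hα]
      nlinarith [hC0, hd0]
    linarith
  -- the two-point infimum equals 1/d
  have hinf : sInf {e : ℝ | ∃ u ∈ rf.F, u x = 1 ∧ u y = 0 ∧ rf.E u u = e} = d⁻¹ := by
    have h1 := hR x y
    rw [ResistanceForm.rmetric, if_neg hxy] at h1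
    rw [← hd] at h1
    rw [h1, inv_inv]
  -- main lower bound for each admissible f
  have hmain : ∀ f : X → ℝ, f x = 1 → f y = 0 →
      1 / (2 * d) ≤ (1 / 2) * ∑ p ∈ Bf, ∑ q ∈ Bf, (f p - f q) ^ 2 * μ p q := by
    intro f hfx hfy
    set ft : X → ℝ := fun z => tr (f z) with hft
    set g : X → ℝ := fun z => min (ft z) (φ z) with hg
    have hgx : g x = 1 := by
      rw [hg]
      simp only
      rw [hft]
      simp only
      rw [hfx, tr_one, hφx]
      norm_num
    have hgy : g y = 0 := by
      rw [hg]
      simp only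
      rw [hft]
      simp only
      rw [hfy, tr_of_nonpos (le_refl 0)]
      exact min_eq_left (hφrange y).1
    -- lower bound via the trace
    have hlow : d⁻¹ ≤ rf.traceQ (V : Set X) g := by
      rw [← hinf]
      exact pair_le_traceQ rf V g hx hy hgx hgy
    -- pointwise estimates
    have hμnn : ∀ a ∈ V, ∀ b ∈ V, a ≠ b → 0 ≤ μ a b := by
      intro a ha b hb hab
      exact mu_nonneg rf V μ ⟨hμsymm, hμdiag, hμid⟩ ha hb hab
    have hWzero : ∀ b ∈ Wf, g b = 0 := by
      intro b hb
      rw [hg]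
      simp only
      rw [hφW b hb]
      exact min_eq_right (tr_nonneg _)
    have hgφ : ∀ a : X, 0 ≤ g a ∧ g a ≤ φ a := by
      intro a
      constructor
      · exact le_min (tr_nonneg _) (hφrange a).1
      · exact min_le_right _ _
    -- blockwise inequality
    have hblock : ∑ a ∈ V, ∑ b ∈ V, (g a - g b) * (g a - g b) * μ a b ≤
        (∑ a ∈ Bf, ∑ b ∈ Bf, (f a - f b) * (f a - f b) * μ a b) +
        ∑ a ∈ V, ∑ b ∈ V, (φ a - φ b) * (φ a - φ b) * μ a b := by
      have h1g := sum_split V (fun p => p ∈ Metric.ball x (α * dist x y))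
        (fun a b => (g a - g b) * (g a - g b) * μ a b)
      have h1φ := sum_split V (fun p => p ∈ Metric.ball x (α * dist x y))
        (fun a b => (φ a - φ b) * (φ a - φ b) * μ a b)
      rw [← hBf, ← hWf] at h1g h1φ
      have hBV : ∀ a ∈ Bf, a ∈ V := fun a ha => Finset.mem_of_mem_filter a ha
      have hWV : ∀ a ∈ Wf, a ∈ V := fun a ha => Finset.mem_of_mem_filter a ha
      have hBWne : ∀ a ∈ Bf, ∀ b ∈ Wf, a ≠ b := by
        intro a ha b hb h
        subst h
        rw [hBf, Finset.mem_filter] at ha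
        rw [hWf, Finset.mem_filter] at hb
        exact hb.2 ha.2
      -- block (B,B)
      have h11 : ∑ a ∈ Bf, ∑ b ∈ Bf, (g a - g b) * (g a - g b) * μ a b ≤
          (∑ a ∈ Bf, ∑ b ∈ Bf, (f a - f b) * (f a - f b) * μ a b) +
          ∑ a ∈ Bf, ∑ b ∈ Bf, (φ a - φ b) * (φ a - φ b) * μ a b := by
        rw [← Finset.sum_add_distrib]
        refine Finset.sum_le_sum (fun a ha => ?_)
        rw [← Finset.sum_add_distrib]
        refine Finset.sum_le_sum (fun b hb => ?_)
        rcases eq_or_ne a b with rfl | hab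
        · simp
        · have hμab := hμnn a (hBV a ha) b (hBV b hb) hab
          refine edge_bound hμab ?_
          have h1 : (g a - g b) ^ 2 ≤ (ft a - ft b) ^ 2 + (φ a - φ b) ^ 2 :=
            min_diff_sq (ft a) (ft b) (φ a) (φ b)
          have h2 : (ft a - ft b) ^ 2 ≤ (f a - f b) ^ 2 := tr_diff_sq (f a) (f b)
          linarith
      -- block (B,W)
      have h12 : ∑ a ∈ Bf, ∑ b ∈ Wf, (g a - g b) * (g a - g b) * μ a b ≤
          ∑ a ∈ Bf, ∑ b ∈ Wf, (φ a - φ b) * (φ a - φ b) * μ a b := by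
        refine Finset.sum_le_sum (fun a ha => Finset.sum_le_sum (fun b hb => ?_))
        have hμab := hμnn a (hBV a ha) b (hWV b hb) (hBWne a ha b hb)
        have hzero : g b = 0 := hWzero b hb
        have hφzero : φ b = 0 := hφW b hb
        have hsq : (g a - g b) * (g a - g b) ≤ (φ a - φ b) * (φ a - φ b) := by
          rw [hzero, hφzero, sub_zero, sub_zero]
          exact mul_self_le_mul_self (hgφ a).1 (hgφ a).2
        exact mul_le_mul_of_nonneg_right hsq hμab
      -- block (W,B)
      have h21 : ∑ a ∈ Wf, ∑ b ∈ Bf, (g a - g b) * (g a - g b) * μ a b ≤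
          ∑ a ∈ Wf, ∑ b ∈ Bf, (φ a - φ b) * (φ a - φ b) * μ a b := by
        refine Finset.sum_le_sum (fun a ha => Finset.sum_le_sum (fun b hb => ?_))
        have hμab := hμnn a (hWV a ha) b (hBV b hb) (Ne.symm (hBWne b hb a ha))
        have hzero : g a = 0 := hWzero a ha
        have hφzero : φ a = 0 := hφW a ha
        have hsq : (g a - g b) * (g a - g b) ≤ (φ a - φ b) * (φ a - φ b) := by
          rw [hzero, hφzero, zero_sub, zero_sub]
          rw [neg_mul_neg, neg_mul_neg]
          exact mul_self_le_mul_self (hgφ b).1 (hgφ b).2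
        exact mul_le_mul_of_nonneg_right hsq hμab
      -- block (W,W)
      have h22 : ∑ a ∈ Wf, ∑ b ∈ Wf, (g a - g b) * (g a - g b) * μ a b ≤
          ∑ a ∈ Wf, ∑ b ∈ Wf, (φ a - φ b) * (φ a - φ b) * μ a b := by
        refine Finset.sum_le_sum (fun a ha => Finset.sum_le_sum (fun b hb => ?_))
        have hga : g a = 0 := hWzero a ha
        have hgb : g b = 0 := hWzero b hb
        rw [hga, hgb, sub_zero, zero_mul, zero_mul]
        rcases eq_or_ne a b with rfl | hab
        · simp
        · have hμab := hμnn a (hWV a ha) b (hWV b hb) hab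
          exact mul_nonneg (mul_self_nonneg _) hμab
      linarith [h11, h12, h21, h22, h1g, h1φ]
    -- the trace energy of φ
    have hφtrace : (1 / 2 : ℝ) * ∑ a ∈ V, ∑ b ∈ V, (φ a - φ b) * (φ a - φ b) * μ a b ≤
        1 / (4 * d) := by
      rw [← hμid φ]
      exact le_trans (traceQ_le rf _ φ hφF (fun z _ => rfl)) hφE'
    -- combine
    have hgtrace := hμid g
    have hcomb : d⁻¹ ≤ (1 / 2) * (∑ a ∈ Bf, ∑ b ∈ Bf, (f a - f b) * (f a - f b) * μ a b) +
        1 / (4 * d) := by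
      calc d⁻¹ ≤ rf.traceQ (V : Set X) g := hlow
        _ = (1 / 2) * ∑ a ∈ V, ∑ b ∈ V, (g a - g b) * (g a - g b) * μ a b := hgtrace
        _ ≤ (1 / 2) * ((∑ a ∈ Bf, ∑ b ∈ Bf, (f a - f b) * (f a - f b) * μ a b) +
            ∑ a ∈ V, ∑ b ∈ V, (φ a - φ b) * (φ a - φ b) * μ a b) := by linarith [hblock]
        _ = (1 / 2) * (∑ a ∈ Bf, ∑ b ∈ Bf, (f a - f b) * (f a - f b) * μ a b) +
            (1 / 2) * ∑ a ∈ V, ∑ b ∈ V, (φ a - φ b) * (φ a - φ b) * μ a b := by ring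
        _ ≤ _ := by linarith [hφtrace]
    have hconv : ∑ p ∈ Bf, ∑ q ∈ Bf, (f p - f q) ^ 2 * μ p q =
        ∑ a ∈ Bf, ∑ b ∈ Bf, (f a - f b) * (f a - f b) * μ a b := by
      refine Finset.sum_congr rfl (fun a _ => Finset.sum_congr rfl (fun b _ => ?_))
      ring
    rw [hconv]
    have h3 : d⁻¹ = 1 / d := (one_div d).symm
    rw [h3] at hcomb
    have h4 : 1 / (2 * d) ≤ 1 / d - 1 / (4 * d) := by
      rw [div_sub_div _ _ (ne_of_gt hd0) (by positivity : (4:ℝ) * d ≠ 0)]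
      rw [div_le_div_iff₀ (by positivity) (by positivity)]
      nlinarith [hd0]
    linarith
  -- conclude: the infimum is at least 1/(2d)
  set S : Set ℝ := {e : ℝ | ∃ f : X → ℝ, f x = 1 ∧ f y = 0 ∧
      e = (1 / 2) * ∑ p ∈ V.filter (fun p => p ∈ Metric.ball x (α * dist x y)),
            ∑ q ∈ V.filter (fun q => q ∈ Metric.ball x (α * dist x y)),
              (f p - f q) ^ 2 * μ p q} with hS
  have hSne : S.Nonempty := by
    refine ⟨_, (fun z => if z = x then (1:ℝ) else 0), if_pos rfl, ?_, rfl⟩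
    exact if_neg (Ne.symm hxy)
  have hSlow : ∀ e ∈ S, 1 / (2 * d) ≤ e := by
    rintro e ⟨f, hfx, hfy, rfl⟩
    exact hmain f hfx hfy
  have hInfS : 1 / (2 * d) ≤ sInf S := le_csInf hSne hSlow
  have hpos : (0:ℝ) < 1 / (2 * d) := by positivity
  calc (sInf S)⁻¹ ≤ (1 / (2 * d))⁻¹ := by
        apply inv_anti₀ hpos hInfS
    _ = 2 * d := by
        rw [one_div, inv_inv]
end

section
/- Let (Y,ρ) be a uniformly perfect metric space and let μ be a Borel measure on Y with the volume doubling property with respect to ρ. Then there exists γ₁ > 1 such that μ(B_ρ(x, r/γ₁)) ≤ μ(B_ρ(x,r))/2 for every x ∈ Y and every r ∈ (0, diam(Y,ρ)). -/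
open Filter Set Metric
open scoped ENNReal Topology

/-- A measure `μ` on a (pseudo)metric space has the volume doubling property:
there is `C > 1` with `0 < μ(B(x,2r)) ≤ C · μ(B(x,r)) < ∞` for all `x` and `r > 0`. -/
def VolumeDoubling {Y : Type*} [PseudoMetricSpace Y] [MeasurableSpace Y] (μ : MeasureTheory.Measure Y) : Prop :=
  ∃ C : ℝ≥0∞, 1 < C ∧ C ≠ ⊤ ∧ ∀ (x : Y) (r : ℝ), 0 < r →
    0 < μ (Metric.ball x (2 * r)) ∧
    μ (Metric.ball x (2 * r)) ≤ C * μ (Metric.ball x r) ∧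
    μ (Metric.ball x r) < ⊤

/-- (Reverse volume doubling.)  Let `(Y,ρ)` be a uniformly perfect metric
space and `μ` a Borel measure with the volume doubling property.  Then there is `γ₁ > 1`
such that `μ(B(x, r/γ₁)) ≤ μ(B(x,r))/2` for every `x ∈ Y` and `r ∈ (0, diam(Y,ρ))`. -/
theorem reverse_volume_doubling {Y : Type*} [MetricSpace Y] [MeasurableSpace Y]
    [BorelSpace Y]
    (hup : UniformlyPerfectOf fun x y : Y => dist x y)
    (μ : MeasureTheory.Measure Y) (hvd : VolumeDoubling μ) :
    ∃ γ₁ : ℝ, 1 < γ₁ ∧ ∀ (x : Y) (r : ℝ), 0 < r →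
      ENNReal.ofReal r < EMetric.diam (Set.univ : Set Y) →
      μ (Metric.ball x (r / γ₁)) ≤ μ (Metric.ball x r) / 2 := by
    classical
  obtain ⟨γ, hγ, hup⟩ := hup
  obtain ⟨C, hC1, hCt, hvd⟩ := hvd
  have hγ0 : (0:ℝ) < γ := lt_trans one_pos hγ
  -- choose k with 8γ < 2^k
  obtain ⟨k, hk⟩ : ∃ k : ℕ, 8 * γ < 2 ^ k := pow_unbounded_of_one_lt (8*γ) one_lt_two
  set δ : ℝ≥0∞ := (C ^ k)⁻¹ with hδdef
  have hCk0 : C ^ k ≠ 0 := pow_ne_zero k (by positivity)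
  have hCkt : C ^ k ≠ ⊤ := ENNReal.pow_ne_top hCt
  have hδ0 : δ ≠ 0 := ENNReal.inv_ne_zero.2 hCkt
  have hδ1 : δ ≤ 1 := ENNReal.inv_le_one.2 (one_le_pow_of_one_le' hC1.le k)
  have hδt : δ ≠ ⊤ := ne_top_of_le_ne_top ENNReal.one_ne_top hδ1
  have hlt : (1 : ℝ≥0∞) - δ < 1 := ENNReal.sub_lt_self ENNReal.one_ne_top one_ne_zero hδ0
  -- doubling iterate
  have hdk0 : ∀ (n : ℕ) (y : Y) (t : ℝ), 0 < t → μ (Metric.ball y (2 ^ n * t)) ≤ C ^ n * μ (Metric.ball y t) := by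
    intro n
    induction n with
    | zero => simp
    | succ n ih =>
      intro y t ht
      have h1 : (2:ℝ) ^ (n+1) * t = 2 * (2 ^ n * t) := by ring
      have h2 : (0:ℝ) < 2 ^ n * t := by positivity
      calc μ (Metric.ball y (2 ^ (n+1) * t)) = μ (Metric.ball y (2 * (2 ^ n * t))) := by rw [h1]
        _ ≤ C * μ (Metric.ball y (2 ^ n * t)) := (hvd y _ h2).2.1
        _ ≤ C * (C ^ n * μ (Metric.ball y t)) := mul_le_mul_right (ih y t ht) C
        _ = C ^ (n+1) * μ (Metric.ball y t) := by rw [pow_succ]; ring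
  have hdk := hdk0 k
  -- one-step estimate
  have step : ∀ (x : Y) (r : ℝ), 0 < r → Metric.ball x (r/2) ≠ Set.univ →
      μ (Metric.ball x (r / (4*γ))) ≤ (1 - δ) * μ (Metric.ball x r) := by
    intro x r hr huniv
    set s : ℝ := r / (2*γ) with hsdef
    have hs : 0 < s := by positivity
    have hs2 : s < r / 2 := by
      rw [hsdef, div_lt_div_iff₀ (by positivity) (by norm_num)]
      nlinarith
    have hsetball : ∀ t : ℝ, {y : Y | dist x y < t} = Metric.ball x t := by
      intro t; ext y; simp [Metric.mem_ball, dist_comm]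
    have hnu : {y : Y | dist x y < s} ≠ Set.univ := by
      rw [hsetball]
      intro h
      apply huniv
      apply Set.eq_univ_of_univ_subset
      rw [← h]
      exact Metric.ball_subset_ball hs2.le
    obtain ⟨y, hy1, hy2⟩ := hup x s hs hnu
    simp only [Set.mem_diff, Set.mem_setOf_eq, not_lt] at hy1 hy2
    have hxy2 : s ≤ dist x y := hy2
    have hγs : γ * s = r / 2 := by
      rw [hsdef]; field_simp
    have hxy1 : dist x y < r / 2 := by rw [← hγs]; exact hy1
    -- ball y (s/2) ⊆ ball x r
    have claim1 : Metric.ball y (s/2) ⊆ Metric.ball x r := by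
      intro z hz
      rw [Metric.mem_ball] at hz ⊢
      have := dist_triangle z y x
      rw [dist_comm y x] at this
      linarith
    -- ball x (s/2) disjoint from ball y (s/2)
    have hdisj : Disjoint (Metric.ball x (s/2)) (Metric.ball y (s/2)) := by
      rw [Set.disjoint_left]
      intro z hz1 hz2
      rw [Metric.mem_ball] at hz1 hz2
      have := dist_triangle x z y
      rw [dist_comm x z] at this
      linarith
    -- ball x r ⊆ ball y (2^k * (s/2))
    have claim3 : Metric.ball x r ⊆ Metric.ball y (2 ^ k * (s/2)) := by
      intro z hz
      rw [Metric.mem_ball] at hz ⊢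
      have htri := dist_triangle z x y
      have h2r : 2 * r ≤ 2 ^ k * (s/2) := by
        have hs4 : s / 2 = r / (4*γ) := by rw [hsdef]; ring
        rw [hs4, ← mul_div_assoc, le_div_iff₀ (by positivity)]
        nlinarith
      linarith
    have hM : μ (Metric.ball x r) ≠ ⊤ := (hvd x r hr).2.2.ne
    have h1 : μ (Metric.ball x r) ≤ C ^ k * μ (Metric.ball y (s/2)) :=
      le_trans (MeasureTheory.measure_mono claim3) (hdk y (s/2) (by positivity))
    have h2 : δ * μ (Metric.ball x r) ≤ μ (Metric.ball y (s/2)) := by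
      calc δ * μ (Metric.ball x r) ≤ δ * (C ^ k * μ (Metric.ball y (s/2))) := mul_le_mul_right h1 δ
        _ = (C ^ k)⁻¹ * C ^ k * μ (Metric.ball y (s/2)) := by rw [hδdef, mul_assoc]
        _ = μ (Metric.ball y (s/2)) := by rw [ENNReal.inv_mul_cancel hCk0 hCkt, one_mul]
    have h3 : μ (Metric.ball x (s/2)) + μ (Metric.ball y (s/2)) ≤ μ (Metric.ball x r) := by
      rw [← MeasureTheory.measure_union hdisj measurableSet_ball]
      exact MeasureTheory.measure_mono (Set.union_subset (Metric.ball_subset_ball (by linarith)) claim1)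
    have key : μ (Metric.ball x (s/2)) + δ * μ (Metric.ball x r) ≤
        (1 - δ) * μ (Metric.ball x r) + δ * μ (Metric.ball x r) := by
      have heq : (1 - δ) * μ (Metric.ball x r) + δ * μ (Metric.ball x r) = μ (Metric.ball x r) := by
        rw [← add_mul, tsub_add_cancel_of_le hδ1, one_mul]
      rw [heq]
      exact le_trans (add_le_add_right h2 _) h3
    have hfin : δ * μ (Metric.ball x r) ≠ ⊤ := ENNReal.mul_ne_top hδt hM
    have hs4 : s / 2 = r / (4*γ) := by rw [hsdef]; ring
    rw [← hs4]
    exact (ENNReal.add_le_add_iff_right hfin).1 key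
  -- iterate
  have iter : ∀ (m : ℕ) (x : Y) (r : ℝ), 0 < r → Metric.ball x (r/2) ≠ Set.univ →
      μ (Metric.ball x (r / (4*γ) ^ m)) ≤ (1 - δ) ^ m * μ (Metric.ball x r) := by
    intro m
    induction m with
    | zero => intro x r hr _; simp
    | succ n ih =>
      intro x r hr huniv
      have hr' : 0 < r / (4*γ) := by positivity
      have huniv' : Metric.ball x ((r / (4*γ)) / 2) ≠ Set.univ := by
        intro h
        apply huniv
        apply Set.eq_univ_of_univ_subset
        rw [← h]
        apply Metric.ball_subset_ball
        rw [div_div, div_le_div_iff₀ (by positivity) (by norm_num)]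
        nlinarith
      have heq : r / (4*γ) ^ (n+1) = (r / (4*γ)) / (4*γ) ^ n := by
        rw [div_div, pow_succ]; ring_nf
      calc μ (Metric.ball x (r / (4*γ) ^ (n+1)))
          = μ (Metric.ball x ((r / (4*γ)) / (4*γ) ^ n)) := by rw [heq]
        _ ≤ (1 - δ) ^ n * μ (Metric.ball x (r / (4*γ))) := ih x _ hr' huniv'
        _ ≤ (1 - δ) ^ n * ((1 - δ) * μ (Metric.ball x r)) :=
            mul_le_mul_right (step x r hr huniv) _
        _ = (1 - δ) ^ (n+1) * μ (Metric.ball x r) := by rw [pow_succ]; ring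
  -- choose m with (1-δ)^m ≤ 1/2 and m ≥ 1
  have htend := ENNReal.tendsto_pow_atTop_nhds_zero_of_lt_one hlt
  have hev : ∀ᶠ m in atTop, (1 - δ) ^ m < 2⁻¹ :=
    htend.eventually (gt_mem_nhds (by norm_num : (0:ℝ≥0∞) < 2⁻¹))
  obtain ⟨m₀, hm₀⟩ := hev.exists
  set m : ℕ := m₀ + 1 with hmdef
  have hm : (1 - δ) ^ m ≤ 2⁻¹ := by
    calc (1 - δ) ^ m = (1 - δ) ^ m₀ * (1 - δ) := pow_succ _ _
      _ ≤ (1 - δ) ^ m₀ * 1 := mul_le_mul_right (tsub_le_self.trans le_rfl) _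
      _ = (1 - δ) ^ m₀ := mul_one _
      _ ≤ 2⁻¹ := hm₀.le
  refine ⟨(4*γ) ^ m, one_lt_pow₀ (by linarith) (by omega), ?_⟩
  intro x r hr hdiam
  -- ball x (r/2) ≠ univ
  obtain ⟨u, v, huv⟩ : ∃ u v : Y, r < dist u v := by
    by_contra h
    push_neg at h
    have : EMetric.diam (Set.univ : Set Y) ≤ ENNReal.ofReal r :=
      EMetric.diam_le fun a _ b _ => by
        rw [edist_dist]; exact ENNReal.ofReal_le_ofReal (h a b)
    exact absurd hdiam this.not_gt
  have huniv : Metric.ball x (r/2) ≠ Set.univ := by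
    intro h
    have hu : u ∈ Metric.ball x (r/2) := h ▸ Set.mem_univ u
    have hv : v ∈ Metric.ball x (r/2) := h ▸ Set.mem_univ v
    rw [Metric.mem_ball] at hu hv
    have := dist_triangle u x v
    rw [dist_comm x v] at this
    linarith
  calc μ (Metric.ball x (r / (4*γ) ^ m)) ≤ (1 - δ) ^ m * μ (Metric.ball x r) :=
        iter m x r hr huniv
    _ ≤ 2⁻¹ * μ (Metric.ball x r) := mul_le_mul_left hm _
    _ = μ (Metric.ball x r) / 2 := by rw [ENNReal.div_eq_inv_mul]
end

section
/- Let (E, F) be a resistance form on a set X whose resistance metric R is complete and such that (X,R) is doubling and uniformly perfect. Let d be a metric on X with d ∼_QS R, and let μ be a Borel measure on X with the volume doubling property with respect to d. Define R̄_d(x,r) := sup_{y ∈ B_d(x,r)} R(x,y) and h(x,r) := μ(B_d(x,r))·R̄_d(x,r). Then: (a) there exists C > 0 with h(x,2r) ≤ C·h(x,r) for every x ∈ X and r > 0; and (b) there exists γ₂ > 1 with h(x, r/γ₂) ≤ h(x,r)/2 for every x ∈ X and r ∈ (0, diam(X,d)). -/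
open Filter Set Metric
open scoped ENNReal Topology

/-- `d` is quasisymmetric to `ρ` (`d ∼_QS ρ`): there is a homeomorphism
`θ : [0,∞) → [0,∞)` with `ρ(x,y)/ρ(x,z) ≤ θ(d(x,y)/d(x,z))` whenever `x ≠ z`. -/
def QuasiSymmetric {X : Type*} (d ρ : X → X → ℝ) : Prop :=
  ∃ θ : ℝ → ℝ, ContinuousOn θ (Set.Ici 0) ∧ StrictMonoOn θ (Set.Ici 0) ∧ θ 0 = 0 ∧
    Set.MapsTo θ (Set.Ici 0) (Set.Ici 0) ∧ Set.SurjOn θ (Set.Ici 0) (Set.Ici 0) ∧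
    ∀ x y z : X, x ≠ z → ρ x y / ρ x z ≤ θ (d x y / d x z)

/-- Completeness of a distance function `ρ` on `X`: every `ρ`-Cauchy sequence
`ρ`-converges to some point of `X`. -/
def CompleteOf {X : Type*} (ρ : X → X → ℝ) : Prop :=
  ∀ u : ℕ → X, (∀ ε : ℝ, 0 < ε → ∃ N : ℕ, ∀ m ≥ N, ∀ n ≥ N, ρ (u m) (u n) < ε) →
    ∃ x : X, ∀ ε : ℝ, 0 < ε → ∃ N : ℕ, ∀ n ≥ N, ρ x (u n) < ε

namespace ResistanceForm

variable {X : Type*}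

lemma rmetric_self' (rf : ResistanceForm X) (x : X) : rf.rmetric x x = 0 := by
  simp [rmetric]

lemma rmetric_pos' (rf : ResistanceForm X) {x y : X} (h : x ≠ y) : 0 < rf.rmetric x y := by
  rw [rmetric, if_neg h]
  exact inv_pos.mpr (rf.inf_pos x y h)

lemma rmetric_nonneg' (rf : ResistanceForm X) (x y : X) : 0 ≤ rf.rmetric x y := by
  rcases eq_or_ne x y with rfl | h
  · simp [rmetric_self']
  · exact (rf.rmetric_pos' h).le

end ResistanceForm

set_option maxHeartbeats 1000000 in
/-- Let `(E,F)` be a resistance form whose resistance metric `R` is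
complete, doubling and uniformly perfect, let `d` be a metric on `X` (the ambient metric)
with `d ∼_QS R`, and let `μ` be a Borel measure that is volume doubling with respect to
`d`.  With `R̄_d(x,r) = sup_{y ∈ B_d(x,r)} R(x,y)` and `h(x,r) = μ(B_d(x,r))·R̄_d(x,r)`:
(a) `h(x,2r) ≤ C·h(x,r)` for all `x` and `r > 0`;
(b) there is `γ₂ > 1` with `h(x,r/γ₂) ≤ h(x,r)/2` for all `x` and `r ∈ (0, diam(X,d))`. -/
theorem h_doubling_and_reverse_doubling {X : Type*} [MetricSpace X] [MeasurableSpace X]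
    [BorelSpace X]
    (rf : ResistanceForm X)
    (hcomp : CompleteOf rf.rmetric) (hdb : DoublingOf rf.rmetric)
    (hup : UniformlyPerfectOf rf.rmetric)
    (hqs : QuasiSymmetric (fun x y : X => dist x y) rf.rmetric)
    (μ : MeasureTheory.Measure X) (hvd : VolumeDoubling μ) :
    (∃ C : ℝ, 0 < C ∧ ∀ (x : X) (r : ℝ), 0 < r →
      (μ (Metric.ball x (2 * r))).toReal * sSup (rf.rmetric x '' Metric.ball x (2 * r)) ≤
        C * ((μ (Metric.ball x r)).toReal * sSup (rf.rmetric x '' Metric.ball x r))) ∧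
    (∃ γ₂ : ℝ, 1 < γ₂ ∧ ∀ (x : X) (r : ℝ), 0 < r →
      ENNReal.ofReal r < EMetric.diam (Set.univ : Set X) →
      (μ (Metric.ball x (r / γ₂))).toReal * sSup (rf.rmetric x '' Metric.ball x (r / γ₂)) ≤
        ((μ (Metric.ball x r)).toReal * sSup (rf.rmetric x '' Metric.ball x r)) / 2) := by
  classical
  obtain ⟨θ, θcont, θmono, θ0, θmaps, θsurj, θqs⟩ := hqs
  obtain ⟨γR, hγR, hUPR⟩ := hup
  obtain ⟨Cμ, hCμ, hCμtop, hVD⟩ := hvd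
  have hCμR : (1:ℝ) < Cμ.toReal := by
    have := ENNReal.toReal_strict_mono hCμtop hCμ
    simpa using this
  -- nonnegativity of sSup of rmetric images
  have hSnn : ∀ (x : X) (s : Set X), 0 ≤ sSup (rf.rmetric x '' s) := by
    intro x s
    apply Real.sSup_nonneg
    rintro _ ⟨y, -, rfl⟩
    exact rf.rmetric_nonneg' x y
  rcases subsingleton_or_nontrivial X with hsub | hnt
  · -- degenerate case: X has at most one point
    have hS0 : ∀ (x : X) (s : ℝ), sSup (rf.rmetric x '' Metric.ball x s) = 0 := by
      intro x s
      refine le_antisymm (Real.sSup_le ?_ le_rfl) (hSnn x _)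
      rintro _ ⟨y, -, rfl⟩
      have : y = x := Subsingleton.elim y x
      simp [this, rf.rmetric_self']
    constructor
    · exact ⟨1, one_pos, fun x r hr => by simp [hS0]⟩
    · exact ⟨2, one_lt_two, fun x r hr _ => by simp [hS0]⟩
  · -- main case
    obtain ⟨a, b, hab⟩ := exists_pair_ne X
    have θnn : ∀ t : ℝ, 0 ≤ t → 0 ≤ θ t := fun t ht => θmaps ht
    have θmono' : MonotoneOn θ (Set.Ici 0) := θmono.monotoneOn
    have θ1 : (1:ℝ) ≤ θ 1 := by
      have h := θqs a b b hab
      have hd : dist a b ≠ 0 := by simpa [dist_eq_zero] using hab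
      have hρ : rf.rmetric a b ≠ 0 := (rf.rmetric_pos' hab).ne'
      rw [div_self hρ, div_self hd] at h
      exact h
    have θ2pos : (0:ℝ) < θ 2 := lt_of_lt_of_le one_pos
      (θ1.trans (θmono' (by norm_num) (by norm_num) one_le_two))
    -- small values of θ
    have θsmall : ∀ ε : ℝ, 0 < ε → ∃ δ : ℝ, 0 < δ ∧ ∀ t : ℝ, 0 ≤ t → t < δ → θ t < ε := by
      intro ε hε
      obtain ⟨t, ht0, hθt⟩ := θsurj (show ε/2 ∈ Set.Ici (0:ℝ) by simp [le_of_lt (half_pos hε)])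
      have htpos : 0 < t := by
        rcases lt_or_eq_of_le (show (0:ℝ) ≤ t from ht0) with h | h
        · exact h
        · exfalso; rw [← h, θ0] at hθt; linarith [half_pos hε, hθt]
      refine ⟨t, htpos, fun s hs hst => ?_⟩
      have : θ s < θ t := θmono hs (le_of_lt htpos) hst
      rw [hθt] at this; linarith
    -- positivity of θ on positive reals
    have θpos : ∀ t : ℝ, 0 < t → 0 < θ t := by
      intro t ht
      have := θmono (le_refl (0:ℝ)) ht.le ht
      rwa [θ0] at this
    -- basic QS bound
    have hbound : ∀ (x z y : X) (c : ℝ), 0 ≤ c → 0 < dist x z →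
        dist x y ≤ c * dist x z → rf.rmetric x y ≤ θ c * rf.rmetric x z := by
      intro x z y c hc hdz hxy
      have hxz : x ≠ z := by
        intro h; rw [h] at hdz; simp at hdz
      have hρz : 0 < rf.rmetric x z := rf.rmetric_pos' hxz
      have h := θqs x y z hxz
      have hratio : dist x y / dist x z ≤ c := (div_le_iff₀ hdz).mpr hxy
      have hθ : θ (dist x y / dist x z) ≤ θ c :=
        θmono' (Set.mem_Ici.mpr (div_nonneg dist_nonneg hdz.le)) (Set.mem_Ici.mpr hc) hratio
      have h2 := h.trans hθ
      calc rf.rmetric x y = (rf.rmetric x y / rf.rmetric x z) * rf.rmetric x z := by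
            field_simp
        _ ≤ θ c * rf.rmetric x z := mul_le_mul_of_nonneg_right h2 hρz.le
    -- ======== uniform perfectness of d =========
    have θ2ge1 : (1:ℝ) ≤ θ 2 := θ1.trans (θmono' (by norm_num) (by norm_num) one_le_two)
    have hγRpos : (0:ℝ) < γR := lt_trans one_pos hγR
    set ε₀ : ℝ := 1 / (2 * γR * θ 2) with hε₀def
    have h2γRθ : (0:ℝ) < 2 * γR * θ 2 := by positivity
    have hε₀pos : 0 < ε₀ := by rw [hε₀def]; positivity
    have hε₀mul : ε₀ * (2 * γR * θ 2) = 1 := by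
      rw [hε₀def]; field_simp
    obtain ⟨δ, hδpos, hδ⟩ := θsmall ε₀ hε₀pos
    set γd : ℝ := max (2/δ) 2 with hγddef
    have hγd2 : 2 ≤ γd := le_max_right _ _
    have hγd1 : (1:ℝ) < γd := lt_of_lt_of_le one_lt_two hγd2
    have hγdpos : (0:ℝ) < γd := lt_trans one_pos hγd1
    have hθγd : θ (1/γd) < ε₀ := by
      apply hδ _ (by positivity)
      have h1 : 2/δ ≤ γd := le_max_left _ _
      have h2 : 2 ≤ δ * γd := by
        have := mul_le_mul_of_nonneg_left h1 hδpos.le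
        rwa [mul_div_cancel₀ _ hδpos.ne'] at this
      rw [div_lt_iff₀ hγdpos]
      nlinarith
    have hθγdpos : 0 < θ (1/γd) := θpos _ (by positivity)
    have hUPd : ∀ (x : X) (r : ℝ), 0 < r → {y : X | dist x y < r} ≠ Set.univ →
        ∃ z : X, r ≤ dist x z ∧ dist x z < γd * r := by
      intro x r hr hne
      by_contra hcon
      push_neg at hcon
      obtain ⟨w₀, hw₀⟩ : ∃ w, r ≤ dist x w := by
        rcases (Set.ne_univ_iff_exists_notMem _).mp hne with ⟨w, hw⟩
        exact ⟨w, not_lt.mp hw⟩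
      set O : Set ℝ := (fun y => dist x y) '' {y | r ≤ dist x y} with hOdef
      have hOne : O.Nonempty := ⟨dist x w₀, ⟨w₀, hw₀, rfl⟩⟩
      have hObdd : BddBelow O := ⟨0, by rintro _ ⟨y, hy, rfl⟩; exact dist_nonneg⟩
      set m := sInf O with hmdef
      have hmlb : γd * r ≤ m := le_csInf hOne (by rintro _ ⟨y, hy, rfl⟩; exact hcon y hy)
      have hmpos : 0 < m := lt_of_lt_of_le (by positivity) hmlb
      obtain ⟨dw, ⟨w, hwO, rfl⟩, hdw⟩ := exists_lt_of_csInf_lt hOne (show m < 2*m by linarith)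
      simp only [Set.mem_setOf_eq] at hwO
      have hdxwlb : γd * r ≤ dist x w := hcon w hwO
      have hdxw : 0 < dist x w := lt_of_lt_of_le (by positivity) hdxwlb
      have hxw : x ≠ w := by
        intro h; rw [h] at hdxw; simp at hdxw
      set ρ₀ := rf.rmetric x w with hρ₀def
      have hρ₀ : 0 < ρ₀ := rf.rmetric_pos' hxw
      have hA : ∀ y : X, dist x y < r → rf.rmetric x y ≤ θ (1/γd) * ρ₀ := by
        intro y hy
        apply hbound x w y (1/γd) (by positivity) hdxw
        rw [one_div]
        have h1 : r ≤ γd⁻¹ * dist x w := by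
          rw [le_inv_mul_iff₀ hγdpos]
          linarith [hdxwlb]
        linarith
      have hOlow : ∀ y : X, r ≤ dist x y → ρ₀ ≤ θ 2 * rf.rmetric x y := by
        intro y hy
        have hmy : m ≤ dist x y := csInf_le hObdd ⟨y, hy, rfl⟩
        have hdy : 0 < dist x y := lt_of_lt_of_le hmpos hmy
        have hdw' : dist x w < 2 * m := hdw
        exact hbound x y w 2 (by norm_num) hdy (by linarith)
      set s' := 2 * θ (1/γd) * ρ₀ with hs'def
      have hs' : 0 < s' := by positivity
      have hε₀half : ε₀ ≤ 1/2 := by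
        rw [hε₀def]
        have h22 : (2:ℝ) ≤ 2*γR*θ 2 := by nlinarith
        exact one_div_le_one_div_of_le two_pos h22
      have hs'lt : s' < ρ₀ := by
        nlinarith [mul_lt_mul_of_pos_right hθγd hρ₀, hε₀half, hρ₀]
      have hballR : {y | rf.rmetric x y < s'} ≠ Set.univ := by
        intro h
        have hw' : rf.rmetric x w < s' := Set.eq_univ_iff_forall.mp h w
        rw [← hρ₀def] at hw'
        linarith
      obtain ⟨p, hp⟩ := hUPR x s' hs' hballR
      have hp1 : rf.rmetric x p < γR * s' := hp.1
      have hp2 : s' ≤ rf.rmetric x p := not_lt.mp hp.2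
      have hplow : θ 2 * rf.rmetric x p < ρ₀ := by
        have h1 : θ 2 * rf.rmetric x p < θ 2 * (γR * s') :=
          mul_lt_mul_of_pos_left hp1 θ2pos
        have h2 : θ 2 * (γR * s') = (2 * γR * θ 2) * θ (1/γd) * ρ₀ := by
          rw [hs'def]; ring
        have h3 : (2 * γR * θ 2) * θ (1/γd) * ρ₀ < (2 * γR * θ 2) * ε₀ * ρ₀ := by
          apply mul_lt_mul_of_pos_right _ hρ₀
          exact mul_lt_mul_of_pos_left hθγd h2γRθ
        have h4 : (2 * γR * θ 2) * ε₀ * ρ₀ = ρ₀ := by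
          rw [mul_comm (2 * γR * θ 2) ε₀, hε₀mul, one_mul]
        linarith
      have hpA : dist x p < r := by
        by_contra hge
        have := hOlow p (not_lt.mp hge)
        linarith
      have := hA p hpA
      linarith
    -- ======== bounded above helper =========
    have hbdd : ∀ (x z : X) (r' : ℝ), 0 < dist x z → 0 < r' →
        BddAbove (rf.rmetric x '' Metric.ball x r') := by
      intro x z r' hdz hr'
      refine ⟨θ (r'/dist x z) * rf.rmetric x z, ?_⟩
      rintro _ ⟨y, hy, rfl⟩
      apply hbound x z y _ (div_nonneg hr'.le hdz.le) hdz
      rw [div_mul_cancel₀ _ hdz.ne']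
      rw [Metric.mem_ball] at hy
      rw [dist_comm]
      exact hy.le
    constructor
    -- ======== part (a) =========
    · refine ⟨Cμ.toReal * max (θ (2*γd)) 1, by positivity, ?_⟩
      intro x r hr
      obtain ⟨hμpos, hμdb, hμfin⟩ := hVD x r hr
      have hμ2 : (μ (Metric.ball x (2*r))).toReal ≤ Cμ.toReal * (μ (Metric.ball x r)).toReal := by
        rw [← ENNReal.toReal_mul]
        exact ENNReal.toReal_mono (ENNReal.mul_ne_top hCμtop hμfin.ne) hμdb
      by_cases hball : {y : X | dist x y < r/γd} = Set.univ
      · -- degenerate: all balls are the whole space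
        have hsub1 : ∀ s : ℝ, r/γd ≤ s → Metric.ball x s = Set.univ := by
          intro s hs
          apply Set.eq_univ_of_forall
          intro y
          have hy := Set.eq_univ_iff_forall.mp hball y
          simp only [Set.mem_setOf_eq] at hy
          rw [Metric.mem_ball, dist_comm]
          linarith
        have hrd : r/γd ≤ r := div_le_self hr.le hγd1.le
        have hb1 : Metric.ball x r = Set.univ := hsub1 r hrd
        have hb2 : Metric.ball x (2*r) = Set.univ := hsub1 (2*r) (by linarith)
        rw [hb1, hb2]
        have hmax : (1:ℝ) ≤ max (θ (2*γd)) 1 := le_max_right _ _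
        have hnn1 : 0 ≤ (μ (Set.univ : Set X)).toReal := ENNReal.toReal_nonneg
        have hnn2 : 0 ≤ sSup (rf.rmetric x '' (Set.univ : Set X)) := hSnn x _
        have hC1 : (1:ℝ) ≤ Cμ.toReal * max (θ (2*γd)) 1 := by
          have := mul_le_mul hCμR.le hmax zero_le_one
            (le_of_lt (lt_trans one_pos hCμR))
          linarith
        exact le_mul_of_one_le_left (mul_nonneg hnn1 hnn2) hC1
      · obtain ⟨z, hz1, hz2⟩ := hUPd x (r/γd) (by positivity) hball
        have hzr : dist x z < r := by
          have : γd * (r/γd) = r := by field_simp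
          linarith
        have hdz : 0 < dist x z := lt_of_lt_of_le (by positivity) hz1
        have hzmem : z ∈ Metric.ball x r := by rw [Metric.mem_ball, dist_comm]; exact hzr
        have hzS1 : rf.rmetric x z ≤ sSup (rf.rmetric x '' Metric.ball x r) :=
          le_csSup (hbdd x z r hdz hr) ⟨z, hzmem, rfl⟩
        have hθnn : 0 ≤ θ (2*γd) := θnn _ (by positivity)
        have hS2b : sSup (rf.rmetric x '' Metric.ball x (2*r)) ≤
            θ (2*γd) * sSup (rf.rmetric x '' Metric.ball x r) := by
          apply Real.sSup_le
          · rintro _ ⟨y, hy, rfl⟩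
            rw [Metric.mem_ball] at hy
            have hyd : dist x y ≤ (2*γd) * dist x z := by
              rw [dist_comm] at hy
              have h1 : r ≤ γd * dist x z := by
                have := mul_le_mul_of_nonneg_left hz1 hγdpos.le
                rwa [mul_div_cancel₀ _ hγdpos.ne'] at this
              nlinarith
            calc rf.rmetric x y ≤ θ (2*γd) * rf.rmetric x z :=
                  hbound x z y (2*γd) (by positivity) hdz hyd
              _ ≤ θ (2*γd) * sSup (rf.rmetric x '' Metric.ball x r) :=
                  mul_le_mul_of_nonneg_left hzS1 hθnn
          · exact mul_nonneg hθnn (hSnn x _)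
        have hS2nn : 0 ≤ sSup (rf.rmetric x '' Metric.ball x (2*r)) := hSnn x _
        have hS1nn : 0 ≤ sSup (rf.rmetric x '' Metric.ball x r) := hSnn x _
        have hA1nn : 0 ≤ (μ (Metric.ball x r)).toReal := ENNReal.toReal_nonneg
        have hA2nn : 0 ≤ (μ (Metric.ball x (2*r))).toReal := ENNReal.toReal_nonneg
        have hCnn : (0:ℝ) ≤ Cμ.toReal := le_of_lt (lt_trans one_pos hCμR)
        have hmax : θ (2*γd) ≤ max (θ (2*γd)) 1 := le_max_left _ _
        have key : (μ (Metric.ball x (2*r))).toReal * sSup (rf.rmetric x '' Metric.ball x (2*r)) ≤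
            (Cμ.toReal * (μ (Metric.ball x r)).toReal) *
              (θ (2*γd) * sSup (rf.rmetric x '' Metric.ball x r)) :=
          mul_le_mul hμ2 hS2b hS2nn (by positivity)
        calc (μ (Metric.ball x (2*r))).toReal * sSup (rf.rmetric x '' Metric.ball x (2*r))
            ≤ (Cμ.toReal * (μ (Metric.ball x r)).toReal) *
              (θ (2*γd) * sSup (rf.rmetric x '' Metric.ball x r)) := key
          _ = (Cμ.toReal * θ (2*γd)) *
              ((μ (Metric.ball x r)).toReal * sSup (rf.rmetric x '' Metric.ball x r)) := by ring
          _ ≤ (Cμ.toReal * max (θ (2*γd)) 1) *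
              ((μ (Metric.ball x r)).toReal * sSup (rf.rmetric x '' Metric.ball x r)) := by
              apply mul_le_mul_of_nonneg_right _ (by positivity)
              exact mul_le_mul_of_nonneg_left hmax hCnn
    -- ======== part (b) =========
    · obtain ⟨δ₂, hδ₂pos, hδ₂⟩ := θsmall (1/2) (by norm_num)
      set γ₂ : ℝ := max (γd/δ₂ + 1) 2 with hγ₂def
      have hγ₂2 : (2:ℝ) ≤ γ₂ := le_max_right _ _
      have hγ₂1 : (1:ℝ) < γ₂ := lt_of_lt_of_le one_lt_two hγ₂2
      have hγ₂pos : (0:ℝ) < γ₂ := lt_trans one_pos hγ₂1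
      have hθγ₂ : θ (γd/γ₂) < 1/2 := by
        apply hδ₂ _ (by positivity)
        rw [div_lt_iff₀ hγ₂pos]
        have h1 : γd/δ₂ + 1 ≤ γ₂ := le_max_left _ _
        have h2 : δ₂ * (γd/δ₂) = γd := by field_simp
        have h3 := mul_le_mul_of_nonneg_left h1 hδ₂pos.le
        rw [mul_add, h2, mul_one] at h3
        linarith
      refine ⟨γ₂, hγ₂1, ?_⟩
      intro x r hr hdiam
      have hne : {y : X | dist x y < r/γd} ≠ Set.univ := by
        intro h
        apply absurd hdiam (not_lt.mpr _)
        apply EMetric.diam_le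
        intro p hp q hq
        have hp' : dist x p < r/γd := Set.eq_univ_iff_forall.mp h p
        have hq' : dist x q < r/γd := Set.eq_univ_iff_forall.mp h q
        rw [edist_dist]
        apply ENNReal.ofReal_le_ofReal
        have htri : dist p q ≤ dist p x + dist x q := dist_triangle p x q
        rw [dist_comm p x] at htri
        have hmul : γd * (r/γd) = r := by field_simp
        have h2 : 2*(r/γd) ≤ r := by
          have := mul_le_mul_of_nonneg_right hγd2 (div_nonneg hr.le hγdpos.le)
          linarith
        linarith
      obtain ⟨z, hz1, hz2⟩ := hUPd x (r/γd) (by positivity) hne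
      have hzr : dist x z < r := by
        have : γd * (r/γd) = r := by field_simp
        linarith
      have hdz : 0 < dist x z := lt_of_lt_of_le (by positivity) hz1
      have hzmem : z ∈ Metric.ball x r := by rw [Metric.mem_ball, dist_comm]; exact hzr
      have hzS1 : rf.rmetric x z ≤ sSup (rf.rmetric x '' Metric.ball x r) :=
        le_csSup (hbdd x z r hdz hr) ⟨z, hzmem, rfl⟩
      have hS1nn : 0 ≤ sSup (rf.rmetric x '' Metric.ball x r) := hSnn x _
      have hSs : sSup (rf.rmetric x '' Metric.ball x (r/γ₂)) ≤
          (1/2) * sSup (rf.rmetric x '' Metric.ball x r) := by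
        apply Real.sSup_le
        · rintro _ ⟨y, hy, rfl⟩
          rw [Metric.mem_ball, dist_comm] at hy
          have hyd : dist x y ≤ (γd/γ₂) * dist x z := by
            have h1 : (γd/γ₂) * (r/γd) = r/γ₂ := by
              field_simp [hγdpos.ne', hγ₂pos.ne']
            have h2 : (γd/γ₂) * (r/γd) ≤ (γd/γ₂) * dist x z :=
              mul_le_mul_of_nonneg_left hz1 (by positivity)
            linarith
          calc rf.rmetric x y ≤ θ (γd/γ₂) * rf.rmetric x z :=
                hbound x z y (γd/γ₂) (by positivity) hdz hyd
            _ ≤ (1/2) * sSup (rf.rmetric x '' Metric.ball x r) := by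
                apply mul_le_mul hθγ₂.le hzS1 (rf.rmetric_nonneg' x z) (by norm_num)
        · positivity
      have hμm : (μ (Metric.ball x (r/γ₂))).toReal ≤ (μ (Metric.ball x r)).toReal := by
        apply ENNReal.toReal_mono (hVD x r hr).2.2.ne
        exact MeasureTheory.measure_mono (Metric.ball_subset_ball (div_le_self hr.le hγ₂1.le))
      have hSsnn : 0 ≤ sSup (rf.rmetric x '' Metric.ball x (r/γ₂)) := hSnn x _
      have hA1nn : 0 ≤ (μ (Metric.ball x r)).toReal := ENNReal.toReal_nonneg
      have key := mul_le_mul hμm hSs hSsnn hA1nn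
      linarith [key]
end

section
/- Let V be a nonempty finite set and for each n ≥ 0 let (E_n, ℓ(V)) be a resistance form on V with associated resistance metric R_n. If for all x, y ∈ V with x ≠ y the limit R(x,y) := lim_{n→∞} R_n(x,y) exists and is positive, then there exists a resistance form (E, ℓ(V)) on V whose associated resistance metric coincides with R (extended by R(x,x)=0). -/
open Filter Set Metric
open scoped ENNReal Topology

set_option linter.unusedSectionVars false
section Helpers

variable {V : Type*} [Fintype V] [DecidableEq V]

/-- The "indicator" function of a point. -/
def dd (x : V) : V → ℝ := fun z => if z = x then 1 else 0

lemma dd_self (x : V) : dd x x = 1 := if_pos rfl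

lemma dd_ne {x z : V} (h : z ≠ x) : dd x z = 0 := if_neg h

lemma sum_dd (u : V → ℝ) : (∑ x, u x • dd x) = u := by
  funext z
  simp [dd, Finset.sum_apply, mul_ite]

lemma sum_dd_one : (∑ x : V, dd x) = fun _ => (1 : ℝ) := by
  funext z
  simp [dd, Finset.sum_apply]

variable (rf : ResistanceForm V) (hm : ∀ u : V → ℝ, u ∈ rf.F)

set_option linter.unusedSectionVars false

include hm

lemma E_zero_left (v : V → ℝ) : rf.E 0 v = 0 := by
  have h := rf.smul_left 0 0 (hm 0) v (hm v)
  simpa using h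

lemma E_sum_left {ι : Type*} (s : Finset ι) (f : ι → V → ℝ) (v : V → ℝ) :
    rf.E (∑ i ∈ s, f i) v = ∑ i ∈ s, rf.E (f i) v := by
  classical
  induction s using Finset.cons_induction with
  | empty => simpa using E_zero_left rf hm v
  | cons a s ha ih =>
    rw [Finset.sum_cons, Finset.sum_cons, rf.add_left _ (hm _) _ (hm _) _ (hm _), ih]

lemma E_expand (s t : ℝ) (p q : V → ℝ) :
    rf.E (s • p + t • q) (s • p + t • q)
      = s ^ 2 * rf.E p p + 2 * s * t * rf.E p q + t ^ 2 * rf.E q q := by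
  have h2 : ∀ r : V → ℝ, rf.E r (s • p + t • q) = s * rf.E r p + t * rf.E r q := by
    intro r
    rw [rf.symm r (hm r) _ (hm _), rf.add_left _ (hm _) _ (hm _) _ (hm r),
      rf.smul_left s p (hm _) r (hm r), rf.smul_left t q (hm _) r (hm r),
      rf.symm p (hm _) r (hm r), rf.symm q (hm _) r (hm r)]
  rw [rf.add_left _ (hm _) _ (hm _) _ (hm _), rf.smul_left s p (hm _) _ (hm _),
    rf.smul_left t q (hm _) _ (hm _), h2 p, h2 q, rf.symm q (hm _) p (hm _)]
  ring

lemma E_one (u : V → ℝ) : rf.E u (fun _ => (1 : ℝ)) = 0 := by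
  set o : V → ℝ := fun _ => 1 with ho
  have hoo : rf.E o o = 0 := (rf.null_iff_const o (hm o)).2 ⟨1, fun _ => rfl⟩
  set b := rf.E u o with hb
  by_contra hbne
  have key : ∀ t : ℝ, 0 ≤ rf.E u u + 2 * t * b := by
    intro t
    have h1 := E_expand rf hm 1 t u o
    simp only [one_smul, one_pow, hoo, mul_zero, add_zero, mul_one, ← hb] at h1
    have h0 := rf.nonneg _ (hm (u + t • o))
    rw [h1] at h0
    linarith
  have h2 : rf.E u u + 2 * (-(rf.E u u + 1) / (2 * b)) * b = -1 := by
    field_simp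
    ring
  have h3 := key (-(rf.E u u + 1) / (2 * b))
  rw [h2] at h3
  linarith

lemma E_repr (u v : V → ℝ) :
    rf.E u v = ∑ x, ∑ y, u x * v y * rf.E (dd x) (dd y) := by
  conv_lhs => rw [← sum_dd u]
  rw [E_sum_left rf hm]
  refine Finset.sum_congr rfl fun x _ => ?_
  rw [rf.smul_left (u x) _ (hm _) _ (hm _)]
  have hv : rf.E (dd x) v = ∑ y, v y * rf.E (dd x) (dd y) := by
    rw [rf.symm _ (hm _) _ (hm _)]
    conv_lhs => rw [← sum_dd v]
    rw [E_sum_left rf hm]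
    refine Finset.sum_congr rfl fun y _ => ?_
    rw [rf.smul_left (v y) _ (hm _) _ (hm _), rf.symm _ (hm _) _ (hm _)]
  rw [hv, Finset.mul_sum]
  exact Finset.sum_congr rfl fun y _ => by ring

lemma rowsum (x : V) : (∑ y, rf.E (dd x) (dd y)) = 0 := by
  have h2 : rf.E (∑ y : V, dd y) (dd x) = ∑ y, rf.E (dd y) (dd x) :=
    E_sum_left rf hm _ _ _
  calc (∑ y, rf.E (dd x) (dd y)) = ∑ y, rf.E (dd y) (dd x) :=
        Finset.sum_congr rfl fun y _ => rf.symm _ (hm _) _ (hm _)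
    _ = rf.E (∑ y : V, dd y) (dd x) := h2.symm
    _ = rf.E (dd x) (fun _ => (1 : ℝ)) := by rw [sum_dd_one]; exact rf.symm _ (hm _) _ (hm _)
    _ = 0 := E_one rf hm _

lemma E_quad (u : V → ℝ) :
    rf.E u u = (1 / 2) * ∑ x, ∑ y, (-(rf.E (dd x) (dd y))) * (u x - u y) ^ 2 := by
  have hS1 : (∑ x, ∑ y, rf.E (dd x) (dd y) * (u x) ^ 2) = 0 := by
    refine Finset.sum_eq_zero fun x _ => ?_
    rw [← Finset.sum_mul, rowsum rf hm, zero_mul]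
  have hS3 : (∑ x, ∑ y, rf.E (dd x) (dd y) * (u y) ^ 2) = 0 := by
    rw [Finset.sum_comm]
    refine Finset.sum_eq_zero fun y _ => ?_
    have hcol : (∑ x, rf.E (dd x) (dd y)) = 0 := by
      rw [show (∑ x, rf.E (dd x) (dd y)) = ∑ x, rf.E (dd y) (dd x) from
        Finset.sum_congr rfl fun x _ => rf.symm _ (hm _) _ (hm _), rowsum rf hm]
    rw [← Finset.sum_mul, hcol, zero_mul]
  have hS2 : (∑ x, ∑ y, rf.E (dd x) (dd y) * u x * u y) = rf.E u u := by
    rw [E_repr rf hm]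
    exact Finset.sum_congr rfl fun x _ => Finset.sum_congr rfl fun y _ => by ring
  have expand : (∑ x, ∑ y, (-(rf.E (dd x) (dd y))) * (u x - u y) ^ 2)
      = ∑ x, ∑ y, (2 * (rf.E (dd x) (dd y) * u x * u y)
          - rf.E (dd x) (dd y) * (u x) ^ 2 - rf.E (dd x) (dd y) * (u y) ^ 2) :=
    Finset.sum_congr rfl fun x _ => Finset.sum_congr rfl fun y _ => by ring
  rw [expand]
  simp only [Finset.sum_sub_distrib, ← Finset.mul_sum, hS1, hS3, hS2]
  ring

end Helpers
section Helpers2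

set_option linter.unusedSectionVars false

variable {V : Type*} [Fintype V] [DecidableEq V]

/-- The conductance matrix of a resistance form (zero on the diagonal). -/
noncomputable def cmat (rf : ResistanceForm V) : V × V → ℝ :=
  fun p => if p.1 = p.2 then 0 else -(rf.E (dd p.1) (dd p.2))

/-- The set of admissible energies between `x` and `y`. -/
def Sset (rf : ResistanceForm V) (x y : V) : Set ℝ :=
  {e : ℝ | ∃ u ∈ rf.F, u x = 1 ∧ u y = 0 ∧ rf.E u u = e}

/-- The quadratic-form expression associated with a conductance matrix. -/
noncomputable def EEof (cl : V × V → ℝ) (u v : V → ℝ) : ℝ :=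
  (1 / 2) * ∑ x, ∑ y, cl (x, y) * (u x - u y) * (v x - v y)

lemma cmat_diag (rf : ResistanceForm V) (x : V) : cmat rf (x, x) = 0 := if_pos rfl

lemma cmat_offdiag (rf : ResistanceForm V) {x y : V} (hxy : x ≠ y) :
    cmat rf (x, y) = -(rf.E (dd x) (dd y)) := if_neg hxy

variable (rf : ResistanceForm V) (hm : ∀ u : V → ℝ, u ∈ rf.F)

include hm

lemma E_eq_EEof (u : V → ℝ) : rf.E u u = EEof (cmat rf) u u := by
  rw [E_quad rf hm u, EEof]
  refine congrArg _ (Finset.sum_congr rfl fun x _ => Finset.sum_congr rfl fun y _ => ?_)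
  by_cases hxy : x = y
  · subst hxy; simp [cmat_diag]
  · rw [cmat_offdiag rf hxy]; ring

lemma cmat_nonneg (p : V × V) : 0 ≤ cmat rf p := by
  obtain ⟨x, y⟩ := p
  by_cases hxy : x = y
  · simp [hxy, cmat_diag]
  · rw [cmat_offdiag rf hxy]
    have hd : 0 ≤ rf.E (dd y) (dd y) := rf.nonneg _ (hm _)
    set a := rf.E (dd x) (dd x) with ha
    set b := rf.E (dd x) (dd y) with hb
    set d := rf.E (dd y) (dd y) with hdd
    by_contra hcon
    push_neg at hcon
    have hbpos : 0 < b := by linarith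
    have key : ∀ ε : ℝ, 0 < ε → 0 ≤ -2 * ε * b + ε ^ 2 * d := by
      intro ε hε
      have htr : (fun z => max 0 (min 1 ((dd x + (-ε) • dd y) z))) = dd x := by
        funext z
        simp only [Pi.add_apply, Pi.smul_apply, smul_eq_mul, dd]
        by_cases hz : z = x
        · subst hz
          rw [if_pos rfl, if_neg hxy]
          norm_num
        · rw [if_neg hz]
          by_cases hz2 : z = y
          · rw [if_pos hz2]
            rw [show (0:ℝ) + -ε * 1 = -ε by ring]
            rw [min_eq_right (by linarith : -ε ≤ (1:ℝ)),
              max_eq_left (by linarith : -ε ≤ (0:ℝ))]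
          · rw [if_neg hz2]
            norm_num
      have hmk := (rf.markov (dd x + (-ε) • dd y) (hm _)).2
      rw [htr] at hmk
      have hexp := E_expand rf hm 1 (-ε) (dd x) (dd y)
      rw [one_smul] at hexp
      rw [hexp, ← ha, ← hb, ← hdd] at hmk
      nlinarith [hmk]
    have hx1 : (0:ℝ) < d + 1 := by linarith
    have h1 := key (b / (d + 1)) (div_pos hbpos hx1)
    have h2 : -2 * (b / (d + 1)) * b + (b / (d + 1)) ^ 2 * d
        = (b ^ 2 * (-(d + 2))) / (d + 1) ^ 2 := by
      field_simp
      ring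
    rw [h2] at h1
    have h3 : (b ^ 2 * (-(d + 2))) / (d + 1) ^ 2 < 0 :=
      div_neg_of_neg_of_pos (by nlinarith) (by positivity)
    linarith

lemma cmat_symm (x y : V) : cmat rf (x, y) = cmat rf (y, x) := by
  by_cases hxy : x = y
  · subst hxy; rfl
  · rw [cmat_offdiag rf hxy, cmat_offdiag rf (Ne.symm hxy), rf.symm _ (hm _) _ (hm _)]

lemma Sset_nonempty {x y : V} (hxy : x ≠ y) : (Sset rf x y).Nonempty := by
  obtain ⟨u, hu, h1, h0⟩ := rf.exists_unit x y hxy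
  exact ⟨rf.E u u, u, hu, h1, h0, rfl⟩

lemma Sset_bddBelow (x y : V) : BddBelow (Sset rf x y) := by
  refine ⟨0, fun e he => ?_⟩
  obtain ⟨u, hu, _, _, hE⟩ := he
  exact hE ▸ rf.nonneg u hu

lemma cmat_le_mem {x y : V} (hxy : x ≠ y) {e : ℝ} (he : e ∈ Sset rf x y) :
    cmat rf (x, y) ≤ e := by
  obtain ⟨w, hw, h1, h0, hE⟩ := he
  have hq := E_eq_EEof rf hm w
  set T : V → V → ℝ := fun a b => cmat rf (a, b) * (w a - w b) * (w a - w b) with hT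
  have hTnn : ∀ a b, 0 ≤ T a b := by
    intro a b
    rw [hT]
    dsimp only
    rw [mul_assoc]
    exact mul_nonneg (cmat_nonneg rf hm _) (mul_self_nonneg _)
  have hsub : (({x, y} : Finset V)) ⊆ Finset.univ := Finset.subset_univ _
  have h1' : (∑ a ∈ ({x, y} : Finset V), ∑ b, T a b) ≤ ∑ a, ∑ b, T a b :=
    Finset.sum_le_sum_of_subset_of_nonneg hsub
      (fun a _ _ => Finset.sum_nonneg fun b _ => hTnn a b)
  rw [Finset.sum_pair hxy] at h1'
  have h2 : T x y ≤ ∑ b, T x b :=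
    Finset.single_le_sum (fun b _ => hTnn x b) (Finset.mem_univ y)
  have h3 : T y x ≤ ∑ b, T y b :=
    Finset.single_le_sum (fun b _ => hTnn y b) (Finset.mem_univ x)
  have hTxy : T x y = cmat rf (x, y) := by
    rw [hT]; dsimp only; rw [h1, h0]; ring
  have hTyx : T y x = cmat rf (x, y) := by
    rw [hT]; dsimp only; rw [h1, h0, ← cmat_symm rf hm x y]; ring
  have hfin : cmat rf (x, y) ≤ (1 / 2) * ∑ a, ∑ b, T a b := by
    nlinarith [hTxy, hTyx, h1', h2, h3]
  rw [← hE, hq, EEof]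
  exact hfin

lemma cmat_le_sInf {x y : V} (hxy : x ≠ y) : cmat rf (x, y) ≤ sInf (Sset rf x y) :=
  le_csInf (Sset_nonempty rf hm hxy) (fun e he => cmat_le_mem rf hm hxy he)

lemma sq_le_E {x y : V} (hxy : x ≠ y) (u : V → ℝ) :
    sInf (Sset rf x y) * (u x - u y) ^ 2 ≤ rf.E u u := by
  by_cases hd : u x = u y
  · simp only [hd, sub_self, ne_eq, OfNat.ofNat_ne_zero, not_false_eq_true, zero_pow, mul_zero]
    exact rf.nonneg u (hm u)
  · set d := u x - u y with hdd
    have hd0 : d ≠ 0 := sub_ne_zero.2 hd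
    set w : V → ℝ := u + (-(u y)) • (fun _ => (1:ℝ)) with hw
    have hEw : rf.E w w = rf.E u u := by
      have h := E_expand rf hm 1 (-(u y)) u (fun _ => (1:ℝ))
      rw [one_smul] at h
      rw [hw, h, E_one rf hm u,
        (rf.null_iff_const (fun _ => (1:ℝ)) (hm _)).2 ⟨1, fun _ => rfl⟩]
      ring
    set v : V → ℝ := d⁻¹ • w with hv
    have hsm : rf.E v v = d⁻¹ ^ 2 * rf.E w w := by
      rw [hv, rf.smul_left _ _ (hm _) _ (hm _), rf.symm w (hm _) _ (hm _),
        rf.smul_left _ _ (hm _) _ (hm _), rf.symm w (hm _) w (hm _)]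
      ring
    have hv1 : v x = 1 := by
      rw [hv, hw]
      simp only [Pi.smul_apply, Pi.add_apply, smul_eq_mul]
      field_simp
      rw [hdd]
      ring
    have hv0 : v y = 0 := by
      rw [hv, hw]
      simp only [Pi.smul_apply, Pi.add_apply, smul_eq_mul]
      ring
    have hmem : rf.E v v ∈ Sset rf x y := ⟨v, hm v, hv1, hv0, rfl⟩
    have h1 : sInf (Sset rf x y) ≤ rf.E v v := csInf_le (Sset_bddBelow rf hm x y) hmem
    have h2 := mul_le_mul_of_nonneg_right h1 (sq_nonneg d)
    calc sInf (Sset rf x y) * d ^ 2 ≤ rf.E v v * d ^ 2 := h2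
      _ = rf.E u u := by rw [hsm, hEw]; field_simp

lemma rmetric_eq {x y : V} (hxy : x ≠ y) :
    rf.rmetric x y = (sInf (Sset rf x y))⁻¹ := by
  rw [ResistanceForm.rmetric, if_neg hxy]
  rfl

end Helpers2
section Helpers3

lemma trunc_lip {a b : ℝ} (hab : a ≤ b) :
    0 ≤ max 0 (min 1 b) - max 0 (min 1 a) ∧ max 0 (min 1 b) - max 0 (min 1 a) ≤ b - a := by
  constructor
  · have h1 : min 1 a ≤ min 1 b := min_le_min le_rfl hab
    have := max_le_max (le_refl (0:ℝ)) h1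
    linarith
  · have h2 : min 1 b ≤ min 1 a + (b - a) := by
      rcases le_total (1:ℝ) a with h|h
      · rw [min_eq_left h]
        exact le_trans (min_le_left _ _) (by linarith)
      · rw [min_eq_right h]
        exact le_trans (min_le_right _ _) (by linarith)
    have h3 : max 0 (min 1 b) ≤ max 0 (min 1 a) + (b - a) := by
      apply max_le
      · have h4 : (0:ℝ) ≤ max 0 (min 1 a) := le_max_left _ _
        linarith
      · exact le_trans h2 (add_le_add_left (le_max_right 0 (min 1 a)) _)
    linarith

lemma trunc_sq_le (a b : ℝ) :
    (max 0 (min 1 a) - max 0 (min 1 b)) * (max 0 (min 1 a) - max 0 (min 1 b))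
      ≤ (a - b) * (a - b) := by
  rcases le_total a b with h|h
  · obtain ⟨h1, h2⟩ := trunc_lip h
    nlinarith
  · obtain ⟨h1, h2⟩ := trunc_lip h
    nlinarith

lemma tendsto_EEof {V : Type*} [Fintype V] (cl : V × V → ℝ) (d : ℕ → V × V → ℝ)
    (hd : ∀ p, Filter.Tendsto (fun k => d k p) Filter.atTop (𝓝 (cl p)))
    (w : ℕ → V → ℝ) (wl : V → ℝ)
    (hw : ∀ x, Filter.Tendsto (fun k => w k x) Filter.atTop (𝓝 (wl x))) :
    Filter.Tendsto
      (fun k => (1 / 2) * ∑ x, ∑ y, d k (x, y) * (w k x - w k y) * (w k x - w k y))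
      Filter.atTop (𝓝 (EEof cl wl wl)) := by
  rw [EEof]
  apply Filter.Tendsto.const_mul
  exact tendsto_finset_sum _ fun x _ => tendsto_finset_sum _ fun y _ =>
    ((hd (x, y)).mul ((hw x).sub (hw y))).mul ((hw x).sub (hw y))

end Helpers3
/-- Let `V` be a nonempty finite set and `(E_n, ℓ(V))` resistance forms
on `V` (with full domain) whose resistance metrics `R_n` converge pointwise, for `x ≠ y`,
to a positive limit `R(x,y)`.  Then there exists a resistance form `(E, ℓ(V))` on `V`
whose resistance metric coincides with `R` (extended by `R(x,x) = 0`). -/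
theorem exists_resistanceForm_of_tendsto_rmetric {V : Type*} [Finite V] [Nonempty V]
    (rfn : ℕ → ResistanceForm V) (hFn : ∀ n, (rfn n).F = Set.univ)
    (R : V → V → ℝ)
    (hlim : ∀ x y : V, x ≠ y → 0 < R x y ∧
      Tendsto (fun n => (rfn n).rmetric x y) atTop (𝓝 (R x y)))
    (hdiag : ∀ x : V, R x x = 0) :
    ∃ rf : ResistanceForm V, rf.F = Set.univ ∧ ∀ x y : V, rf.rmetric x y = R x y := by
  classical
  cases nonempty_fintype V
  have hm : ∀ n (u : V → ℝ), u ∈ (rfn n).F := fun n u => by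
    rw [hFn n]; exact Set.mem_univ u
  -- convergence of the infima of energies
  have htends : ∀ x y, x ≠ y →
      Tendsto (fun n => sInf (Sset (rfn n) x y)) atTop (𝓝 (R x y)⁻¹) := by
    intro x y hxy
    have h1 : ∀ n, sInf (Sset (rfn n) x y) = ((rfn n).rmetric x y)⁻¹ := by
      intro n
      rw [rmetric_eq (rfn n) (hm n) hxy, inv_inv]
    simp only [h1]
    exact ((hlim x y hxy).2).inv₀ (ne_of_gt (hlim x y hxy).1)
  -- uniform bounds on the conductances
  have hub : ∀ p : V × V, ∃ M : ℝ, ∀ n, cmat (rfn n) p ∈ Set.Icc 0 M := by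
    rintro ⟨x, y⟩
    by_cases hxy : x = y
    · exact ⟨0, fun n => by simp [hxy, cmat_diag]⟩
    · obtain ⟨M, hM⟩ : BddAbove (Set.range fun n => sInf (Sset (rfn n) x y)) :=
        (htends x y hxy).bddAbove_range
      refine ⟨M, fun n => ⟨cmat_nonneg (rfn n) (hm n) _, ?_⟩⟩
      exact le_trans (cmat_le_sInf (rfn n) (hm n) hxy) (hM (Set.mem_range_self n))
  choose B hB using hub
  -- extraction of a convergent subsequence of conductance matrices
  have hK : IsCompact (Set.pi Set.univ fun p : V × V => Set.Icc (0:ℝ) (B p)) :=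
    isCompact_univ_pi fun p => isCompact_Icc
  obtain ⟨cl, hclmem, φ, hφ, hcl⟩ :=
    hK.tendsto_subseq (x := fun n => cmat (rfn n)) (fun n p _ => hB p n)
  have hclp : ∀ p, Tendsto (fun k => cmat (rfn (φ k)) p) atTop (𝓝 (cl p)) :=
    fun p => (tendsto_pi_nhds.mp hcl) p
  have hclnn : ∀ p, 0 ≤ cl p := fun p => (hclmem p (Set.mem_univ p)).1
  -- convergence of energies for a fixed function
  have hEconv : ∀ u : V → ℝ,
      Tendsto (fun k => (rfn (φ k)).E u u) atTop (𝓝 (EEof cl u u)) := by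
    intro u
    have h := tendsto_EEof cl (fun k => cmat (rfn (φ k))) hclp (fun _ => u) u
      (fun x => tendsto_const_nhds)
    have heq : (fun k => (1/2) * ∑ x, ∑ y,
        cmat (rfn (φ k)) (x, y) * (u x - u y) * (u x - u y))
        = fun k => (rfn (φ k)).E u u :=
      funext fun k => by rw [E_eq_EEof (rfn (φ k)) (hm _) u]; rfl
    rwa [heq] at h
  -- the fundamental lower bound for the limit form
  have keyLB : ∀ x y, x ≠ y → ∀ u : V → ℝ,
      (R x y)⁻¹ * (u x - u y) ^ 2 ≤ EEof cl u u := by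
    intro x y hxy u
    have h2 : Tendsto (fun k => sInf (Sset (rfn (φ k)) x y) * (u x - u y) ^ 2) atTop
        (𝓝 ((R x y)⁻¹ * (u x - u y) ^ 2)) :=
      ((htends x y hxy).comp hφ.tendsto_atTop).mul_const _
    exact le_of_tendsto_of_tendsto' h2 (hEconv u)
      (fun k => sq_le_E (rfn (φ k)) (hm _) hxy u)
  -- algebraic properties of the limit form
  have Esymm : ∀ u v : V → ℝ, EEof cl u v = EEof cl v u := by
    intro u v
    rw [EEof, EEof]
    exact congrArg _ (Finset.sum_congr rfl fun x _ =>
      Finset.sum_congr rfl fun y _ => by ring)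
  have Eadd : ∀ u v w : V → ℝ, EEof cl (u + v) w = EEof cl u w + EEof cl v w := by
    intro u v w
    simp only [EEof, Pi.add_apply]
    rw [← mul_add, ← Finset.sum_add_distrib]
    refine congrArg _ (Finset.sum_congr rfl fun x _ => ?_)
    rw [← Finset.sum_add_distrib]
    exact Finset.sum_congr rfl fun y _ => by ring
  have Esmul : ∀ (a : ℝ) (u v : V → ℝ), EEof cl (a • u) v = a * EEof cl u v := by
    intro a u v
    simp only [EEof, Pi.smul_apply, smul_eq_mul]
    have hterm : ∀ x y : V, cl (x, y) * (a * u x - a * u y) * (v x - v y)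
        = a * (cl (x, y) * (u x - u y) * (v x - v y)) := fun x y => by ring
    simp only [hterm, ← Finset.mul_sum]
    ring
  have Enng : ∀ u : V → ℝ, 0 ≤ EEof cl u u := by
    intro u
    rw [EEof]
    apply mul_nonneg (by norm_num)
    refine Finset.sum_nonneg fun x _ => Finset.sum_nonneg fun y _ => ?_
    rw [mul_assoc]
    exact mul_nonneg (hclnn _) (mul_self_nonneg _)
  have Enull : ∀ u : V → ℝ, EEof cl u u = 0 ↔ ∃ c : ℝ, ∀ x, u x = c := by
    intro u
    constructor
    · intro h0
      refine ⟨u (Classical.arbitrary V), fun x => ?_⟩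
      by_cases hx : x = Classical.arbitrary V
      · rw [hx]
      · have hk := keyLB x _ hx u
        rw [h0] at hk
        have hpos : 0 < (R x (Classical.arbitrary V))⁻¹ :=
          inv_pos.2 (hlim x _ hx).1
        have hsq : (u x - u (Classical.arbitrary V)) ^ 2 = 0 := by
          nlinarith [sq_nonneg (u x - u (Classical.arbitrary V))]
        have := (pow_eq_zero_iff two_ne_zero).mp hsq
        linarith
    · rintro ⟨c, hc⟩
      rw [EEof]
      have hterm : ∀ x y : V, cl (x, y) * (u x - u y) * (u x - u y) = 0 :=
        fun x y => by rw [hc x, hc y]; ring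
      simp only [hterm, Finset.sum_const_zero, mul_zero]
  have Emark : ∀ u : V → ℝ,
      EEof cl (fun x => max 0 (min 1 (u x))) (fun x => max 0 (min 1 (u x))) ≤ EEof cl u u := by
    intro u
    rw [EEof, EEof]
    apply mul_le_mul_of_nonneg_left _ (by norm_num : (0:ℝ) ≤ 1/2)
    refine Finset.sum_le_sum fun x _ => Finset.sum_le_sum fun y _ => ?_
    rw [mul_assoc, mul_assoc]
    exact mul_le_mul_of_nonneg_left (trunc_sq_le (u x) (u y)) (hclnn _)
  -- completeness of the limit form
  have Ecomp : ∀ u : ℕ → V → ℝ,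
      (∀ ε : ℝ, 0 < ε → ∃ N : ℕ, ∀ m ≥ N, ∀ n ≥ N,
        EEof cl (u m - u n) (u m - u n) < ε) →
      ∃ v : V → ℝ, ∀ ε : ℝ, 0 < ε → ∃ N : ℕ, ∀ n ≥ N,
        EEof cl (v - u n) (v - u n) < ε := by
    intro u hC
    set x₀ := Classical.arbitrary V with hx₀
    have hcc : ∀ x : V, CauchySeq fun n => u n x - u n x₀ := by
      intro x
      by_cases hx : x = x₀
      · have hz : (fun n => u n x - u n x₀) = fun _ => (0:ℝ) := by
          funext n
          rw [hx]
          ring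
        rw [hz]
        exact cauchySeq_const 0
      · rw [Metric.cauchySeq_iff]
        intro ε hε
        have hRpos := (hlim x x₀ hx).1
        obtain ⟨N, hN⟩ := hC (ε ^ 2 / R x x₀) (by positivity)
        refine ⟨N, fun m hm' n hn' => ?_⟩
        have hkey := keyLB x x₀ hx (u m - u n)
        have hlt := hN m hm' n hn'
        have h1 : ((u m - u n) x - (u m - u n) x₀) ^ 2 < ε ^ 2 := by
          have h2 : (R x x₀)⁻¹ * ((u m - u n) x - (u m - u n) x₀) ^ 2 < ε ^ 2 / R x x₀ :=
            lt_of_le_of_lt hkey hlt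
          calc ((u m - u n) x - (u m - u n) x₀) ^ 2
              = R x x₀ * ((R x x₀)⁻¹ * ((u m - u n) x - (u m - u n) x₀) ^ 2) := by
                field_simp
            _ < R x x₀ * (ε ^ 2 / R x x₀) := mul_lt_mul_of_pos_left h2 hRpos
            _ = ε ^ 2 := by field_simp
        rw [Real.dist_eq]
        have heq : (u m - u n) x - (u m - u n) x₀
            = (u m x - u m x₀) - (u n x - u n x₀) := by
          simp only [Pi.sub_apply]; ring
        rw [heq] at h1
        nlinarith [abs_nonneg ((u m x - u m x₀) - (u n x - u n x₀)),
          sq_abs ((u m x - u m x₀) - (u n x - u n x₀))]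
    have hLex : ∀ x : V, ∃ l : ℝ, Tendsto (fun n => u n x - u n x₀) atTop (𝓝 l) :=
      fun x => cauchySeq_tendsto_of_complete (hcc x)
    choose L hL using hLex
    refine ⟨L, ?_⟩
    have h0 : Tendsto (fun n => EEof cl (L - u n) (L - u n)) atTop (𝓝 0) := by
      have hterm : ∀ a b : V,
          Tendsto (fun n => (L - u n) a - (L - u n) b) atTop (𝓝 0) := by
        intro a b
        have heq : (fun n => (L - u n) a - (L - u n) b)
            = fun n => (L a - L b) - ((u n a - u n x₀) - (u n b - u n x₀)) := by
          funext n; simp only [Pi.sub_apply]; ring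
        rw [heq]
        have h2 : Tendsto (fun n => (L a - L b) - ((u n a - u n x₀) - (u n b - u n x₀)))
            atTop (𝓝 ((L a - L b) - (L a - L b))) :=
          Tendsto.sub tendsto_const_nhds ((hL a).sub (hL b))
        simpa using h2
      have h3 : Tendsto (fun n => (1/2) * ∑ a, ∑ b,
          cl (a, b) * ((L - u n) a - (L - u n) b) * ((L - u n) a - (L - u n) b)) atTop
          (𝓝 ((1/2) * ∑ a : V, ∑ b : V, cl (a, b) * 0 * 0)) := by
        apply Tendsto.const_mul
        exact tendsto_finset_sum _ fun a _ => tendsto_finset_sum _ fun b _ =>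
          (tendsto_const_nhds.mul (hterm a b)).mul (hterm a b)
      simpa [EEof] using h3
    intro ε hε
    exact eventually_atTop.mp (h0.eventually (gt_mem_nhds hε))
  -- lower and upper estimates on the admissible-energy set of the limit form
  have hSlow : ∀ x y : V, x ≠ y → ∀ e ∈ {e : ℝ | ∃ u ∈ (Set.univ : Set (V → ℝ)),
      u x = 1 ∧ u y = 0 ∧ EEof cl u u = e}, (R x y)⁻¹ ≤ e := by
    rintro x y hxy e ⟨u, -, h1, h0, hE⟩
    have hk := keyLB x y hxy u
    rw [h1, h0] at hk
    rw [← hE]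
    simpa using hk
  have hSne : ∀ x y : V, x ≠ y → ({e : ℝ | ∃ u ∈ (Set.univ : Set (V → ℝ)),
      u x = 1 ∧ u y = 0 ∧ EEof cl u u = e}).Nonempty :=
    fun x y hxy => ⟨EEof cl (dd x) (dd x),
      dd x, Set.mem_univ _, dd_self x, dd_ne (Ne.symm hxy), rfl⟩
  have hSbdd : ∀ x y : V, BddBelow {e : ℝ | ∃ u ∈ (Set.univ : Set (V → ℝ)),
      u x = 1 ∧ u y = 0 ∧ EEof cl u u = e} := by
    intro x y
    refine ⟨0, ?_⟩
    rintro e ⟨u, -, -, -, hE⟩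
    exact hE ▸ Enng u
  have hSup : ∀ x y : V, x ≠ y → sInf {e : ℝ | ∃ u ∈ (Set.univ : Set (V → ℝ)),
      u x = 1 ∧ u y = 0 ∧ EEof cl u u = e} ≤ (R x y)⁻¹ := by
    intro x y hxy
    refine le_of_forall_pos_le_add fun ε hε => ?_
    have hpick : ∀ k : ℕ, ∃ w : V → ℝ, w x = 1 ∧ w y = 0 ∧
        (rfn (φ k)).E w w < sInf (Sset (rfn (φ k)) x y) + ε ∧
        ∀ z, w z ∈ Set.Icc (0:ℝ) 1 := by
      intro k
      obtain ⟨e, he, helt⟩ :=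
        Real.lt_sInf_add_pos (Sset_nonempty (rfn (φ k)) (hm _) hxy) hε
      obtain ⟨w0, hw0, h1, h0, hEe⟩ := he
      refine ⟨fun z => max 0 (min 1 (w0 z)),
        by show max 0 (min 1 (w0 x)) = 1; rw [h1]; norm_num,
        by show max 0 (min 1 (w0 y)) = 0; rw [h0]; norm_num, ?_, fun z => ⟨le_max_left _ _,
          max_le (by norm_num) (min_le_left _ _)⟩⟩
      have hmk := ((rfn (φ k)).markov w0 (hm _ _)).2
      calc (rfn (φ k)).E _ _ ≤ (rfn (φ k)).E w0 w0 := hmk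
        _ = e := hEe
        _ < _ := helt
    choose w hw1 hw0 hwE hwB using hpick
    have hKw : IsCompact (Set.pi Set.univ fun _ : V => Set.Icc (0:ℝ) 1) :=
      isCompact_univ_pi fun _ => isCompact_Icc
    obtain ⟨vl, hvlmem, ψ, hψ, hvl⟩ :=
      hKw.tendsto_subseq (x := w) (fun k z _ => hwB k z)
    have hvlp : ∀ z, Tendsto (fun k => w (ψ k) z) atTop (𝓝 (vl z)) :=
      fun z => (tendsto_pi_nhds.mp hvl) z
    have hvlx : vl x = 1 := by
      have h1 := hvlp x
      have h2 : (fun k => w (ψ k) x) = fun _ => (1:ℝ) := funext fun k => hw1 _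
      rw [h2] at h1
      exact (tendsto_nhds_unique h1 tendsto_const_nhds)
    have hvly : vl y = 0 := by
      have h1 := hvlp y
      have h2 : (fun k => w (ψ k) y) = fun _ => (0:ℝ) := funext fun k => hw0 _
      rw [h2] at h1
      exact (tendsto_nhds_unique h1 tendsto_const_nhds)
    have hconv : Tendsto (fun k => (rfn (φ (ψ k))).E (w (ψ k)) (w (ψ k))) atTop
        (𝓝 (EEof cl vl vl)) := by
      have h := tendsto_EEof cl (fun k => cmat (rfn (φ (ψ k))))
        (fun p => (hclp p).comp hψ.tendsto_atTop) (fun k => w (ψ k)) vl hvlp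
      have heq : (fun k => (1/2) * ∑ a, ∑ b, cmat (rfn (φ (ψ k))) (a, b)
          * (w (ψ k) a - w (ψ k) b) * (w (ψ k) a - w (ψ k) b))
          = fun k => (rfn (φ (ψ k))).E (w (ψ k)) (w (ψ k)) :=
        funext fun k => by rw [E_eq_EEof (rfn (φ (ψ k))) (hm _)]; rfl
      rwa [heq] at h
    have hconv2 : Tendsto (fun k => sInf (Sset (rfn (φ (ψ k))) x y) + ε) atTop
        (𝓝 ((R x y)⁻¹ + ε)) :=
      ((htends x y hxy).comp (hφ.comp hψ).tendsto_atTop).add_const ε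
    have hle : EEof cl vl vl ≤ (R x y)⁻¹ + ε :=
      le_of_tendsto_of_tendsto' hconv hconv2 (fun k => le_of_lt (hwE (ψ k)))
    have hmem : EEof cl vl vl ∈ {e : ℝ | ∃ u ∈ (Set.univ : Set (V → ℝ)),
        u x = 1 ∧ u y = 0 ∧ EEof cl u u = e} :=
      ⟨vl, Set.mem_univ _, hvlx, hvly, rfl⟩
    exact le_trans (csInf_le (hSbdd x y) hmem) hle
  have hSinf : ∀ x y : V, x ≠ y → sInf {e : ℝ | ∃ u ∈ (Set.univ : Set (V → ℝ)),
      u x = 1 ∧ u y = 0 ∧ EEof cl u u = e} = (R x y)⁻¹ :=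
    fun x y hxy => le_antisymm (hSup x y hxy)
      (le_csInf (hSne x y hxy) (hSlow x y hxy))
  -- assembling the limit resistance form
  refine ⟨{
    F := Set.univ
    E := EEof cl
    zero_mem := Set.mem_univ _
    add_mem := fun _ _ => Set.mem_univ _
    smul_mem := fun _ _ _ => Set.mem_univ _
    const_mem := fun _ => Set.mem_univ _
    symm := fun u _ v _ => Esymm u v
    add_left := fun u _ v _ w _ => Eadd u v w
    smul_left := fun a u _ v _ => Esmul a u v
    nonneg := fun u _ => Enng u
    null_iff_const := fun u _ => Enull u
    complete := fun u _ hC => by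
      obtain ⟨v, hv⟩ := Ecomp u hC
      exact ⟨v, Set.mem_univ _, hv⟩
    sep := fun x y hxy => ⟨dd x, Set.mem_univ _, by
      rw [dd_self x, dd_ne (Ne.symm hxy)]
      norm_num⟩
    exists_unit := fun x y hxy =>
      ⟨dd x, Set.mem_univ _, dd_self x, dd_ne (Ne.symm hxy)⟩
    inf_pos := fun x y hxy => by
      rw [hSinf x y hxy]
      exact inv_pos.2 (hlim x y hxy).1
    markov := fun u _ => ⟨Set.mem_univ _, Emark u⟩ },
    rfl, ?_⟩
  intro x y
  by_cases hxy : x = y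
  · subst hxy
    rw [ResistanceForm.rmetric, if_pos rfl, hdiag]
  · rw [ResistanceForm.rmetric, if_neg hxy]
    show (sInf {e : ℝ | ∃ u ∈ (Set.univ : Set (V → ℝ)),
      u x = 1 ∧ u y = 0 ∧ EEof cl u u = e})⁻¹ = R x y
    rw [hSinf x y hxy, inv_inv]
end
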